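/- arXiv:2108.12339 — 3 statements merged into one kernel-verified Lean document; each statement's English description precedes it below -/
import Mathlib

section
/- Let s ∈ (0,1/2) and let K be a kernel as in the context. If u : ℝ^n → ℝ is bounded and Lipschitz with Lipschitz constant M, then Lu is Hölder continuous of exponent 1 − 2s: for all x₁, x₂ ∈ ℝ^n, |Lu(x₁) − Lu(x₂)| ≤ C M |x₁ − x₂|^{1−2s}, where C depends only on n, s and Λ. -/
open MeasureTheory Set Metric
open Pointwise

noncomputable section

abbrev Rn (n : ℕ) := EuclideanSpace ℝ (Fin n)

/-- A uniformly elliptic, even kernel of order `2s`. -/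
def IsKernel (n : ℕ) (s lam Lam : ℝ) (K : Rn n → ℝ) : Prop :=
  Measurable K ∧ (∀ y, 0 ≤ K y) ∧ (∀ y, K (-y) = K y) ∧
    ∀ y : Rn n, y ≠ 0 →
      lam * ‖y‖ ^ (-(n : ℝ) - 2 * s) ≤ K y ∧ K y ≤ Lam * ‖y‖ ^ (-(n : ℝ) - 2 * s)

/-- The integro-differential operator `Lu(x) = ∫ (u(x) - u(x+y)) K(y) dy`. -/
def Lop {n : ℕ} (K : Rn n → ℝ) (u : Rn n → ℝ) (x : Rn n) : ℝ :=
  ∫ y, (u x - u (x + y)) * K y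

variable {n : ℕ}

lemma measurable_rpow_norm (p : ℝ) : Measurable (fun y : Rn n => ‖y‖ ^ p) :=
  measurable_norm.pow measurable_const

lemma integrableOn_rpow_ball (hn : 0 < n) {p : ℝ} (hp : -(n:ℝ) < p) (hp0 : p ≤ 0)
    {R : ℝ} (hR : 0 < R) :
    IntegrableOn (fun y : Rn n => ‖y‖ ^ p) (ball 0 R) := by
  haveI : Nontrivial (Rn n) := by
    apply Module.nontrivial_of_finrank_pos (R := ℝ)
    rw [finrank_euclideanSpace_fin]; exact hn
  set f : Rn n → ℝ := fun y => ‖y‖ ^ p with hf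
  set A : ℕ → Set (Rn n) := fun k => ball 0 (R * (1/2)^k) \ ball 0 (R * (1/2)^(k+1)) with hA
  have hApos : ∀ k : ℕ, (0:ℝ) < R * (1/2)^(k+1) := fun k => by positivity
  have hmeas : ∀ k, MeasurableSet (A k) := fun k =>
    measurableSet_ball.diff measurableSet_ball
  have hfin : ∀ k, volume (A k) ≠ ⊤ := fun k =>
    ((measure_mono diff_subset).trans_lt measure_ball_lt_top).ne
  have hbd : ∀ k, ∀ y ∈ A k, ‖f y‖ ≤ (R * (1/2)^(k+1)) ^ p := by
    intro k y hy
    have h1 : R * (1/2)^(k+1) ≤ ‖y‖ := by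
      have := hy.2
      simpa [dist_zero_right, not_lt] using this
    rw [Real.norm_eq_abs, abs_of_nonneg (Real.rpow_nonneg (norm_nonneg y) p)]
    exact Real.rpow_le_rpow_of_nonpos (hApos k) h1 hp0
  have hAsub : ∀ k, A k ⊆ ball 0 (R * (1/2)^k) := fun k => diff_subset
  have hint : ∀ k, IntegrableOn f (A k) := by
    intro k
    exact Measure.integrableOn_of_bounded (hfin k)
      (measurable_rpow_norm p).aestronglyMeasurable
      (ae_restrict_of_forall_mem (hmeas k) (hbd k))
  set v : ℝ := (volume (ball (0 : Rn n) 1)).toReal with hv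
  have hmeasball : ∀ (t : ℝ), 0 ≤ t → (volume (ball (0:Rn n) t)).toReal = t ^ n * v := by
    intro t ht
    rw [Measure.addHaar_ball _ _ ht, finrank_euclideanSpace_fin, ENNReal.toReal_mul,
      ENNReal.toReal_ofReal (by positivity)]
  have h2 : (0:ℝ) < 1/2 := by norm_num
  have hterm : ∀ k : ℕ, (R * (1/2:ℝ)^(k+1)) ^ p * ((R * (1/2:ℝ)^k) ^ n * v)
      = ((R/2)^p * (R^n * v)) * ((1/2:ℝ) ^ (p + (n:ℝ))) ^ k := by
    intro k
    have e1 : (R * (1/2:ℝ)^(k+1)) ^ p = (R/2)^p * (((1/2:ℝ)^p)^k) := by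
      rw [pow_succ, show R * ((1/2:ℝ)^k * (1/2)) = (R/2) * (1/2)^k by ring,
        Real.mul_rpow (by positivity) (by positivity)]
      congr 1
      rw [← Real.rpow_natCast (1/2:ℝ) k, ← Real.rpow_mul h2.le, mul_comm,
        Real.rpow_mul h2.le, Real.rpow_natCast]
    have e2 : (R * (1/2:ℝ)^k) ^ n = R^n * (((1/2:ℝ)^n)^k) := by
      rw [mul_pow, ← pow_mul, ← pow_mul, Nat.mul_comm]
    have e3 : ((1/2:ℝ) ^ (p + (n:ℝ))) = (1/2:ℝ)^p * ((1/2:ℝ)^n) := by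
      rw [Real.rpow_add h2, Real.rpow_natCast]
    rw [e1, e2, e3, mul_pow]
    ring
  have hsum : Summable fun k : ℕ => ∫ y in A k, ‖f y‖ := by
    have hθ0 : (0:ℝ) ≤ (1/2:ℝ) ^ (p + (n:ℝ)) := Real.rpow_nonneg (by norm_num) _
    have hθ1 : (1/2:ℝ) ^ (p + (n:ℝ)) < 1 :=
      Real.rpow_lt_one (by norm_num) (by norm_num) (by linarith)
    refine Summable.of_nonneg_of_le (f := fun k : ℕ => (R * (1/2:ℝ)^(k+1)) ^ p * ((R * (1/2:ℝ)^k) ^ n * v))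
      (fun k => integral_nonneg fun y => norm_nonneg _) (fun k => ?_) ?_
    · have hc0 : (0:ℝ) ≤ (R * (1/2:ℝ)^(k+1)) ^ p := Real.rpow_nonneg (by positivity) _
      calc ∫ y in A k, ‖f y‖
          ≤ ∫ _ in A k, (R * (1/2:ℝ)^(k+1)) ^ p := by
            exact setIntegral_mono_on (hint k).norm
              (integrableOn_const (hfin k)) (hmeas k) (hbd k)
        _ = (volume (A k)).toReal * (R * (1/2:ℝ)^(k+1)) ^ p := by
            rw [setIntegral_const, smul_eq_mul]; rfl
        _ ≤ ((R * (1/2:ℝ)^k) ^ n * v) * (R * (1/2:ℝ)^(k+1)) ^ p := by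
            apply mul_le_mul_of_nonneg_right _ hc0
            rw [← hmeasball _ (by positivity)]
            exact ENNReal.toReal_mono (by
              rw [Measure.addHaar_ball _ _ (by positivity : (0:ℝ) ≤ R * (1/2:ℝ)^k)]
              exact ENNReal.mul_ne_top ENNReal.ofReal_ne_top measure_ball_lt_top.ne)
              (measure_mono (hAsub k))
        _ = (R * (1/2:ℝ)^(k+1)) ^ p * ((R * (1/2:ℝ)^k) ^ n * v) := by ring
    · exact (Summable.congr
        ((summable_geometric_of_lt_one hθ0 hθ1).mul_left ((R/2)^p * (R^n * v)))
        (fun k => (hterm k).symm))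
  have hcover : ball (0:Rn n) R ⊆ {0} ∪ ⋃ k, A k := by
    intro y hy
    rcases eq_or_ne y 0 with rfl | hy0
    · exact Or.inl rfl
    right
    have hy' : ‖y‖ < R := by simpa [dist_zero_right] using hy
    have hypos : 0 < ‖y‖ := norm_pos_iff.2 hy0
    have hex : ∃ k : ℕ, R * (1/2:ℝ)^(k+1) ≤ ‖y‖ := by
      obtain ⟨m, hm⟩ := exists_pow_lt_of_lt_one (div_pos hypos hR) (by norm_num : (1/2:ℝ) < 1)
      refine ⟨m, ?_⟩
      rw [lt_div_iff₀ hR] at hm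
      have hp1 : (0:ℝ) < (1/2:ℝ)^m := by positivity
      rw [pow_succ]
      nlinarith
    refine mem_iUnion.2 ⟨Nat.find hex, ?_, ?_⟩
    · simp only [mem_ball, dist_zero_right]
      rcases Nat.eq_zero_or_pos (Nat.find hex) with h0 | hpos
      · rw [h0]; simpa using hy'
      · have hmin := Nat.find_min hex (Nat.sub_lt hpos one_pos)
        rw [show Nat.find hex - 1 + 1 = Nat.find hex by omega] at hmin
        exact lt_of_not_ge hmin
    · simp only [mem_ball, dist_zero_right, not_lt]
      exact Nat.find_spec hex
  have hun : IntegrableOn f ({0} ∪ ⋃ k, A k) := by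
    apply IntegrableOn.union _ (integrableOn_iUnion_of_summable_integral_norm hint hsum)
    rw [IntegrableOn, Measure.restrict_eq_zero.2 (measure_singleton _)]
    exact integrable_zero_measure
  exact hun.mono_set hcover

lemma integrableOn_rpow_compl_ball {q : ℝ} (hq : q < -(n:ℝ))
    {R : ℝ} (hR : 0 < R) :
    IntegrableOn (fun y : Rn n => ‖y‖ ^ q) ((ball (0:Rn n) R)ᶜ) := by
  have hq0 : q ≤ 0 := by have : (0:ℝ) ≤ n := Nat.cast_nonneg n; linarith
  have hbase : Integrable (fun y : Rn n => (1 + ‖y‖) ^ (-(-q))) := by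
    apply integrable_one_add_norm (E := Rn n)
    rw [finrank_euclideanSpace_fin]; linarith
  have hc : (0:ℝ) < 1 + R⁻¹ := by positivity
  apply Integrable.mono' ((hbase.const_mul ((1+R⁻¹) ^ (-q))).integrableOn)
    (measurable_rpow_norm q).aestronglyMeasurable.restrict
  refine ae_restrict_of_forall_mem measurableSet_ball.compl fun y hy => ?_
  have hyR : R ≤ ‖y‖ := by simpa [dist_zero_right, not_lt] using hy
  have hy0 : (0:ℝ) < ‖y‖ := lt_of_lt_of_le hR hyR
  have key : (1 + ‖y‖) / (1 + R⁻¹) ≤ ‖y‖ := by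
    rw [div_le_iff₀ hc]
    have h1 : (1:ℝ) ≤ ‖y‖ * R⁻¹ := by
      rw [← div_eq_mul_inv]; exact (one_le_div hR).2 hyR
    nlinarith
  calc ‖‖y‖ ^ q‖ = ‖y‖ ^ q := Real.norm_of_nonneg (Real.rpow_nonneg (norm_nonneg y) q)
    _ ≤ ((1 + ‖y‖) / (1 + R⁻¹)) ^ q :=
        Real.rpow_le_rpow_of_nonpos (by positivity) key hq0
    _ = (1 + R⁻¹) ^ (-q) * (1 + ‖y‖) ^ (-(-q)) := by
        rw [neg_neg, Real.div_rpow (by positivity) hc.le, Real.rpow_neg hc.le,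
          div_eq_mul_inv, mul_comm]

lemma smul_compl_ball {R : ℝ} (hR : 0 < R) :
    R • (ball (0:Rn n) 1)ᶜ = (ball (0:Rn n) R)ᶜ := by
  ext y
  rw [mem_smul_set_iff_inv_smul_mem₀ hR.ne']
  simp only [mem_compl_iff, mem_ball, dist_zero_right, norm_smul, norm_inv,
    Real.norm_of_nonneg hR.le, not_iff_not]
  rw [inv_mul_lt_iff₀ hR, mul_one]

lemma setIntegral_rpow_norm_smul (p : ℝ) {R : ℝ} (hR : 0 < R) (s : Set (Rn n)) :
    ∫ y in R • s, ‖y‖ ^ p = R ^ ((n:ℝ) + p) * ∫ y in s, ‖y‖ ^ p := by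
  have h := Measure.setIntegral_comp_smul_of_pos (volume) (fun y : Rn n => ‖y‖ ^ p) s hR
  rw [finrank_euclideanSpace_fin] at h
  have h2 : ∀ x : Rn n, ‖R • x‖ ^ p = R ^ p * ‖x‖ ^ p := fun x => by
    rw [norm_smul, Real.norm_of_nonneg hR.le, Real.mul_rpow hR.le (norm_nonneg x)]
  simp_rw [h2, smul_eq_mul] at h
  rw [integral_const_mul] at h
  have hRn : (R:ℝ) ^ n ≠ 0 := by positivity
  rw [eq_inv_mul_iff_mul_eq₀ hRn] at h
  rw [← h, Real.rpow_add hR, Real.rpow_natCast]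
  ring

set_option maxHeartbeats 1000000 in
/-- for `s ∈ (0,1/2)`, if `u` is bounded and Lipschitz with constant `M`,
then `Lu` is `(1-2s)`-Hölder continuous: `|Lu(x₁) - Lu(x₂)| ≤ C M |x₁-x₂|^{1-2s}`,
with `C` depending only on `n`, `s` and `Λ`. -/
theorem stmt5 (n : ℕ) (s lam Lam : ℝ) (hs : s ∈ Ioo (0 : ℝ) (1/2))
    (hlam : 0 < lam) (hll : lam ≤ Lam) :
    ∃ C : ℝ, 0 < C ∧
      ∀ K : Rn n → ℝ, IsKernel n s lam Lam K →
      ∀ (u : Rn n → ℝ) (M B : ℝ),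
        (∀ x, |u x| ≤ B) →
        (∀ x y, |u x - u y| ≤ M * ‖x - y‖) →
        ∀ x₁ x₂ : Rn n,
          |Lop K u x₁ - Lop K u x₂| ≤ C * M * ‖x₁ - x₂‖ ^ (1 - 2 * s) := by
  obtain ⟨hs0, hs2⟩ := hs
  rcases Nat.eq_zero_or_pos n with hn | hn
  · subst hn
    refine ⟨1, one_pos, fun K hK u M B hB hM x₁ x₂ => ?_⟩
    have hx : x₁ = x₂ := Subsingleton.elim x₁ x₂
    rw [hx, sub_self, abs_zero, sub_self, norm_zero,
      Real.zero_rpow (by linarith : (1:ℝ) - 2*s ≠ 0), mul_zero]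
  have hn1 : (1:ℝ) ≤ (n:ℝ) := by exact_mod_cast hn
  set p : ℝ := 1 - (n:ℝ) - 2*s with hp
  set q : ℝ := -(n:ℝ) - 2*s with hq
  have hpn : -(n:ℝ) < p := by rw [hp]; linarith
  have hplt : p < 0 := by rw [hp]; linarith
  have hp0 : p ≤ 0 := hplt.le
  have hqn : q < -(n:ℝ) := by rw [hq]; linarith
  set I₁ := ∫ y in ball (0:Rn n) 1, ‖y‖ ^ p with hI₁
  set I₂ := ∫ y in (ball (0:Rn n) 1)ᶜ, ‖y‖ ^ q with hI₂
  have hI₁0 : 0 ≤ I₁ := integral_nonneg fun y => Real.rpow_nonneg (norm_nonneg y) p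
  have hI₂0 : 0 ≤ I₂ := integral_nonneg fun y => Real.rpow_nonneg (norm_nonneg y) q
  have hLam : 0 < Lam := lt_of_lt_of_le hlam hll
  refine ⟨2*Lam*(I₁+I₂) + 1, by nlinarith, fun K hK u M B hB hM x₁ x₂ => ?_⟩
  obtain ⟨hKm, hK0, _, hKb⟩ := hK
  haveI : Nontrivial (Rn n) := Module.nontrivial_of_finrank_pos (R := ℝ)
    (by rw [finrank_euclideanSpace_fin]; exact hn)
  obtain ⟨z, hz⟩ := exists_ne (0 : Rn n)
  have hM0 : 0 ≤ M := by
    have h1 := (abs_nonneg (u z - u 0)).trans (hM z 0)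
    have h2 : 0 < ‖z - (0:Rn n)‖ := by rw [sub_zero]; exact norm_pos_iff.2 hz
    have h3 := div_nonneg h1 h2.le
    rwa [mul_div_assoc, div_self h2.ne', mul_one] at h3
  have hu_cont : Continuous u := by
    have : LipschitzWith (Real.toNNReal M) u := by
      apply LipschitzWith.of_dist_le_mul
      intro a b
      rw [Real.dist_eq, dist_eq_norm]
      exact (hM a b).trans (mul_le_mul_of_nonneg_right (Real.le_coe_toNNReal M) (norm_nonneg _))
    exact this.continuous
  have hum : Measurable u := hu_cont.measurable
  set f : Rn n → Rn n → ℝ := fun x y => (u x - u (x + y)) * K y with hf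
  have hfm : ∀ x, Measurable (f x) := fun x =>
    (measurable_const.sub (hum.comp (measurable_id.const_add x))).mul hKm
  have hB0 : 0 ≤ B := (abs_nonneg _).trans (hB 0)
  have hfabs : ∀ x y, |f x y| = |u x - u (x + y)| * K y := fun x y => by
    rw [hf, abs_mul, abs_of_nonneg (hK0 y)]
  have hrpow1 : ∀ y : Rn n, y ≠ 0 → ‖y‖ * ‖y‖ ^ q = ‖y‖ ^ p := by
    intro y hy
    have h0 : 0 < ‖y‖ := norm_pos_iff.2 hy
    rw [hp, hq, show (1:ℝ) - (n:ℝ) - 2*s = 1 + (-(n:ℝ) - 2*s) by ring,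
      Real.rpow_add h0, Real.rpow_one]
  have hbound1 : ∀ x y, |f x y| ≤ M * Lam * ‖y‖ ^ p := by
    intro x y
    rcases eq_or_ne y 0 with rfl | hy0
    · simp [hf, Real.zero_rpow hplt.ne]
    · have h0 : 0 < ‖y‖ := norm_pos_iff.2 hy0
      rw [hfabs]
      have h1 : |u x - u (x + y)| ≤ M * ‖y‖ := by
        have := hM x (x + y)
        rwa [sub_add_cancel_left, norm_neg] at this
      calc |u x - u (x+y)| * K y ≤ (M * ‖y‖) * (Lam * ‖y‖ ^ q) :=
            mul_le_mul h1 ((hKb y hy0).2) (hK0 y) (by positivity)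
        _ = M * Lam * (‖y‖ * ‖y‖ ^ q) := by ring
        _ = M * Lam * ‖y‖ ^ p := by rw [hrpow1 y hy0]
  have hIntBall : ∀ x, IntegrableOn (f x) (ball (0:Rn n) 1) := by
    intro x
    apply Integrable.mono' ((integrableOn_rpow_ball hn hpn hp0 one_pos).const_mul (M * Lam))
      (hfm x).aestronglyMeasurable.restrict
    exact ae_of_all _ fun y => by rw [Real.norm_eq_abs]; exact hbound1 x y
  have hbound2 : ∀ x (y : Rn n), y ≠ 0 → |f x y| ≤ (2*B) * (Lam * ‖y‖ ^ q) := by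
    intro x y hy0
    rw [hfabs]
    apply mul_le_mul _ ((hKb y hy0).2) (hK0 y) (by positivity)
    calc |u x - u (x + y)| ≤ |u x| + |u (x + y)| := abs_sub _ _
      _ ≤ B + B := add_le_add (hB x) (hB _)
      _ = 2*B := by ring
  have hIntCompl : ∀ x, IntegrableOn (f x) ((ball (0:Rn n) 1)ᶜ) := by
    intro x
    apply Integrable.mono' ((integrableOn_rpow_compl_ball hqn one_pos).const_mul (2*B*Lam))
      (hfm x).aestronglyMeasurable.restrict
    refine ae_restrict_of_forall_mem measurableSet_ball.compl fun y hy => ?_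
    have hy1 : (1:ℝ) ≤ ‖y‖ := by simpa [dist_zero_right, not_lt] using hy
    have hy0 : y ≠ 0 := by
      intro h; rw [h, norm_zero] at hy1; linarith
    rw [Real.norm_eq_abs]
    calc |f x y| ≤ (2*B) * (Lam * ‖y‖^q) := hbound2 x y hy0
      _ = 2*B*Lam * ‖y‖^q := by ring
  have hInt : ∀ x, Integrable (f x) := by
    intro x
    rw [← integrableOn_univ, ← union_compl_self (ball (0:Rn n) 1)]
    exact (hIntBall x).union (hIntCompl x)
  rcases eq_or_lt_of_le (norm_nonneg (x₁ - x₂)) with h0 | hrpos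
  · have hx : x₁ = x₂ := by
      rw [← sub_eq_zero]; exact norm_eq_zero.1 h0.symm
    rw [hx, sub_self, abs_zero]
    have : (0:ℝ) < 2*Lam*(I₁+I₂) + 1 := by nlinarith
    exact mul_nonneg (mul_nonneg this.le hM0) (Real.rpow_nonneg (norm_nonneg _) _)
  set r := ‖x₁ - x₂‖ with hr
  have hLop : Lop K u x₁ - Lop K u x₂ = ∫ y, (f x₁ y - f x₂ y) := by
    rw [integral_sub (hInt x₁) (hInt x₂)]; rfl
  set g : Rn n → ℝ := fun y => f x₁ y - f x₂ y with hg
  have hgInt : Integrable g := (hInt x₁).sub (hInt x₂)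
  have step1 : |Lop K u x₁ - Lop K u x₂| ≤ ∫ y, |g y| := by
    rw [hLop]
    simpa [Real.norm_eq_abs] using norm_integral_le_integral_norm (μ := volume) g
  have split : (∫ y, |g y|)
      = (∫ y in ball (0:Rn n) r, |g y|) + ∫ y in (ball (0:Rn n) r)ᶜ, |g y| :=
    (integral_add_compl measurableSet_ball hgInt.abs).symm
  have hnear : (∫ y in ball (0:Rn n) r, |g y|) ≤ 2*M*Lam * (r ^ (1-2*s) * I₁) := by
    have hb : ∀ y ∈ ball (0:Rn n) r, |g y| ≤ (2*(M*Lam)) * ‖y‖^p := by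
      intro y _
      calc |g y| ≤ |f x₁ y| + |f x₂ y| := abs_sub _ _
        _ ≤ M*Lam*‖y‖^p + M*Lam*‖y‖^p := add_le_add (hbound1 x₁ y) (hbound1 x₂ y)
        _ = 2*(M*Lam) * ‖y‖^p := by ring
    calc (∫ y in ball (0:Rn n) r, |g y|)
        ≤ ∫ y in ball (0:Rn n) r, (2*(M*Lam)) * ‖y‖^p :=
          setIntegral_mono_on hgInt.abs.integrableOn
            ((integrableOn_rpow_ball hn hpn hp0 hrpos).const_mul _) measurableSet_ball hb
      _ = (2*(M*Lam)) * ∫ y in ball (0:Rn n) r, ‖y‖^p := integral_const_mul _ _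
      _ = 2*M*Lam * (r ^ (1-2*s) * I₁) := by
          rw [← smul_unitBall_of_pos hrpos, setIntegral_rpow_norm_smul p hrpos,
            show (n:ℝ) + p = 1-2*s by rw [hp]; ring, ← hI₁]
          ring
  have hfar : (∫ y in (ball (0:Rn n) r)ᶜ, |g y|) ≤ 2*M*Lam * (r^(1-2*s) * I₂) := by
    have hb : ∀ y ∈ (ball (0:Rn n) r)ᶜ, |g y| ≤ (2*M*r*Lam) * ‖y‖^q := by
      intro y hy
      have hyr : r ≤ ‖y‖ := by simpa [dist_zero_right, not_lt] using hy
      have hy0 : y ≠ 0 := by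
        intro h; rw [h, norm_zero] at hyr; exact absurd hyr (not_le.2 hrpos)
      have hgy : g y = ((u x₁ - u x₂) - (u (x₁ + y) - u (x₂ + y))) * K y := by
        simp only [hg, hf]; ring
      rw [hgy, abs_mul, abs_of_nonneg (hK0 y)]
      have h1 : |(u x₁ - u x₂) - (u (x₁+y) - u (x₂+y))| ≤ M*r + M*r := by
        calc |(u x₁ - u x₂) - (u (x₁+y) - u (x₂+y))|
            ≤ |u x₁ - u x₂| + |u (x₁+y) - u (x₂+y)| := abs_sub _ _
          _ ≤ M*r + M*r := add_le_add (hM x₁ x₂) (by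
              have := hM (x₁+y) (x₂+y)
              rwa [add_sub_add_right_eq_sub] at this)
      calc |(u x₁ - u x₂) - (u (x₁+y) - u (x₂+y))| * K y
          ≤ (M*r + M*r) * (Lam * ‖y‖^q) :=
            mul_le_mul h1 ((hKb y hy0).2) (hK0 y) (by positivity)
        _ = (2*M*r*Lam) * ‖y‖^q := by ring
    have hrr : r * r ^ (-(2*s)) = r ^ (1-2*s) := by
      rw [show (1:ℝ)-2*s = 1 + (-(2*s)) by ring, Real.rpow_add hrpos, Real.rpow_one]
    calc (∫ y in (ball (0:Rn n) r)ᶜ, |g y|)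
        ≤ ∫ y in (ball (0:Rn n) r)ᶜ, (2*M*r*Lam) * ‖y‖^q :=
          setIntegral_mono_on hgInt.abs.integrableOn
            ((integrableOn_rpow_compl_ball hqn hrpos).const_mul _) measurableSet_ball.compl hb
      _ = (2*M*r*Lam) * ∫ y in (ball (0:Rn n) r)ᶜ, ‖y‖^q := integral_const_mul _ _
      _ = 2*M*Lam * (r^(1-2*s) * I₂) := by
          rw [← smul_compl_ball hrpos, setIntegral_rpow_norm_smul q hrpos,
            show (n:ℝ) + q = -(2*s) by rw [hq]; ring, ← hI₂, ← hrr]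
          ring
  have hMr : 0 ≤ M * r^(1-2*s) := mul_nonneg hM0 (Real.rpow_nonneg hrpos.le _)
  calc |Lop K u x₁ - Lop K u x₂| ≤ ∫ y, |g y| := step1
    _ = (∫ y in ball (0:Rn n) r, |g y|) + ∫ y in (ball (0:Rn n) r)ᶜ, |g y| := split
    _ ≤ 2*M*Lam * (r^(1-2*s) * I₁) + 2*M*Lam * (r^(1-2*s) * I₂) := add_le_add hnear hfar
    _ = (2*Lam*(I₁+I₂)) * (M * r^(1-2*s)) := by ring
    _ ≤ (2*Lam*(I₁+I₂) + 1) * (M * r^(1-2*s)) := by nlinarith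
    _ = (2*Lam*(I₁+I₂) + 1) * M * r^(1-2*s) := by ring

end
end

section
/- Let α ∈ (0,1), let Γ : ℝ^n → ℝ be differentiable in a neighbourhood of x₀ with ∇Γ α-Hölder continuous there, and set t₀ = Γ(x₀), a = ∇Γ(x₀). Let v be a nonnegative function defined in a neighbourhood of (x₀,t₀) in ℝ^n × ℝ such that: v = 0 and ∂_t v = 0 at all points (x,t) with t ≤ Γ(x); v is continuously differentiable in t; and on the region {t ≥ Γ(x)} the functions ∂_t v, ∇_x ∂_t v and ∂_{tt} v exist and are α-Hölder continuous in (x,t). Set c₀ = ∂_{tt} v(x₀,t₀). Then, as (x,t) → (0,0): ∂_t v(x₀+x, t₀+t) = c₀ (t − a·x)_+ + O(|t|^{1+α} + |x|^{1+α}) and v(x₀+x, t₀+t) = (c₀/2)(t − a·x)_+² + O(|t|^{2+α} + |x|^{2+α}). -/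
open MeasureTheory Set Metric RealInnerProductSpace

noncomputable section

/-- The region `{t ≥ Γ(x)}` inside the `ρ`-neighbourhood of `(x₀, Γ(x₀))`. -/
def Reg {n : ℕ} (Γ : Rn n → ℝ) (x0 : Rn n) (ρ : ℝ) : Set (Rn n × ℝ) :=
  {p : Rn n × ℝ | ‖p.1 - x0‖ < ρ ∧ |p.2 - Γ x0| < ρ ∧ Γ p.1 ≤ p.2}

lemma rpow_split {a b p : ℝ} (ha : 0 ≤ a) (hb : 0 ≤ b) (hp : 0 ≤ p) :
    (a + b) ^ p ≤ 2 ^ p * (a ^ p + b ^ p) := by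
  have h1 : a + b ≤ 2 * max a b := by
    rcases le_total a b with h | h
    · rw [max_eq_right h]; linarith
    · rw [max_eq_left h]; linarith
  have hm : 0 ≤ max a b := le_max_of_le_left ha
  calc (a + b) ^ p ≤ (2 * max a b) ^ p := Real.rpow_le_rpow (by linarith) h1 hp
    _ = 2 ^ p * (max a b) ^ p := Real.mul_rpow (by norm_num) hm
    _ ≤ 2 ^ p * (a ^ p + b ^ p) := by
        apply mul_le_mul_of_nonneg_left _ (by positivity)
        rcases le_total a b with h | h
        · rw [max_eq_right h]; nlinarith [Real.rpow_nonneg ha p]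
        · rw [max_eq_left h]; nlinarith [Real.rpow_nonneg hb p]
lemma gamma_taylor {n : ℕ} {α : ℝ} (hα0 : 0 < α) (Γ : Rn n → ℝ) (x0 : Rn n) (ρ CΓ : ℝ)
    (hΓdiff : ∀ x ∈ ball x0 ρ, DifferentiableAt ℝ Γ x)
    (hΓhold : ∀ x ∈ ball x0 ρ, ∀ y ∈ ball x0 ρ,
      ‖gradient Γ x - gradient Γ y‖ ≤ CΓ * ‖x - y‖ ^ α)
    (x : Rn n) (hx : ‖x‖ < ρ) :
    |Γ (x0 + x) - Γ x0 - ⟪gradient Γ x0, x⟫| ≤ |CΓ| * ‖x‖ ^ (1 + α) := by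
  rcases eq_or_ne x 0 with rfl | hx0
  · simp [Real.zero_rpow (by positivity : (1:ℝ) + α ≠ 0)]
  have hxpos : 0 < ‖x‖ := norm_pos_iff.mpr hx0
  have hρ0 : (0:ℝ) < ρ := lt_of_le_of_lt (norm_nonneg x) hx
  have hmem : ∀ s ∈ Icc (0:ℝ) 1, x0 + s • x ∈ ball x0 ρ := by
    intro s hs
    simp only [mem_ball, dist_eq_norm, add_sub_cancel_left, norm_smul, Real.norm_eq_abs]
    calc |s| * ‖x‖ ≤ 1 * ‖x‖ := by
          apply mul_le_mul_of_nonneg_right _ (norm_nonneg x)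
          rw [abs_le]; exact ⟨by linarith [hs.1], hs.2⟩
      _ < ρ := by simpa using hx
  set g : ℝ → ℝ := fun s => Γ (x0 + s • x) - s * (fderiv ℝ Γ x0 x) with hg
  have hgrad : ∀ y z : Rn n, ‖fderiv ℝ Γ y - fderiv ℝ Γ z‖ = ‖gradient Γ y - gradient Γ z‖ := by
    intro y z
    rw [gradient, gradient, ← map_sub, LinearIsometryEquiv.norm_map]
  have hder : ∀ s ∈ Icc (0:ℝ) 1,
      HasDerivWithinAt g (fderiv ℝ Γ (x0 + s • x) x - fderiv ℝ Γ x0 x) (Icc 0 1) s := by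
    intro s hs
    have h1 : HasDerivAt (fun s : ℝ => x0 + s • x) x s := by
      simpa using ((hasDerivAt_id s).smul_const x).const_add x0
    have h2 : HasDerivAt (fun s : ℝ => Γ (x0 + s • x)) (fderiv ℝ Γ (x0 + s • x) x) s :=
      ((hΓdiff _ (hmem s hs)).hasFDerivAt).comp_hasDerivAt s h1
    have h3 : HasDerivAt (fun s : ℝ => s * (fderiv ℝ Γ x0 x)) (fderiv ℝ Γ x0 x) s := by
      simpa using (hasDerivAt_id s).mul_const (fderiv ℝ Γ x0 x)
    exact (h2.sub h3).hasDerivWithinAt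
  have hbound : ∀ s ∈ Ico (0:ℝ) 1,
      ‖fderiv ℝ Γ (x0 + s • x) x - fderiv ℝ Γ x0 x‖ ≤ |CΓ| * ‖x‖ ^ α * ‖x‖ := by
    intro s hs
    have h1 : fderiv ℝ Γ (x0 + s • x) x - fderiv ℝ Γ x0 x
        = (fderiv ℝ Γ (x0 + s • x) - fderiv ℝ Γ x0) x := by simp
    rw [h1]
    calc ‖(fderiv ℝ Γ (x0 + s • x) - fderiv ℝ Γ x0) x‖
        ≤ ‖fderiv ℝ Γ (x0 + s • x) - fderiv ℝ Γ x0‖ * ‖x‖ :=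
          ContinuousLinearMap.le_opNorm _ x
      _ ≤ (|CΓ| * ‖x‖ ^ α) * ‖x‖ := by
          apply mul_le_mul_of_nonneg_right _ (norm_nonneg x)
          rw [hgrad]
          calc ‖gradient Γ (x0 + s • x) - gradient Γ x0‖
              ≤ CΓ * ‖x0 + s • x - x0‖ ^ α := by
                apply hΓhold _ (hmem s ⟨hs.1, hs.2.le⟩) _ (by simpa using hρ0)
            _ ≤ |CΓ| * ‖x‖ ^ α := by
                apply mul_le_mul (le_abs_self _) _ (by positivity) (abs_nonneg _)
                apply Real.rpow_le_rpow (norm_nonneg _) _ hα0.le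
                simp only [add_sub_cancel_left, norm_smul, Real.norm_eq_abs]
                calc |s| * ‖x‖ ≤ 1 * ‖x‖ := by
                      apply mul_le_mul_of_nonneg_right _ (norm_nonneg x)
                      rw [abs_le]; exact ⟨by linarith [hs.1], hs.2.le⟩
                  _ = ‖x‖ := one_mul _
  have key := norm_image_sub_le_of_norm_deriv_le_segment' hder hbound 1 ⟨zero_le_one, le_refl 1⟩
  have hg1 : g 1 = Γ (x0 + x) - fderiv ℝ Γ x0 x := by simp [hg]
  have hg0 : g 0 = Γ x0 := by simp [hg]
  have hinner : (⟪gradient Γ x0, x⟫ : ℝ) = fderiv ℝ Γ x0 x := by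
    simp [gradient, InnerProductSpace.toDual_apply_apply]
  rw [hg1, hg0] at key
  have hpow : |CΓ| * ‖x‖ ^ α * ‖x‖ = |CΓ| * ‖x‖ ^ (1 + α) := by
    rw [add_comm, Real.rpow_add hxpos, Real.rpow_one, mul_assoc]
  rw [hinner]
  calc |Γ (x0 + x) - Γ x0 - fderiv ℝ Γ x0 x| = ‖Γ (x0 + x) - fderiv ℝ Γ x0 x - Γ x0‖ := by
        rw [Real.norm_eq_abs]; ring_nf
    _ ≤ |CΓ| * ‖x‖ ^ α * ‖x‖ * (1 - 0) := key
    _ = |CΓ| * ‖x‖ ^ (1 + α) := by rw [← hpow]; ring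

set_option maxHeartbeats 1000000 in
/-- expansion at a free boundary point: with `t₀ = Γ(x₀)`,
`a = ∇Γ(x₀)` and `c₀ = ∂ₜₜv(x₀,t₀)`, one has
`∂ₜv(x₀+x, t₀+t) = c₀ (t - a·x)₊ + O(|t|^{1+α} + |x|^{1+α})` and
`v(x₀+x, t₀+t) = (c₀/2)(t - a·x)₊² + O(|t|^{2+α} + |x|^{2+α})`. -/
theorem stmt13 (n : ℕ) (α : ℝ) (hα : α ∈ Ioo (0 : ℝ) 1)
    (Γ : Rn n → ℝ) (x0 : Rn n) (ρ CΓ Cv : ℝ) (hρ : 0 < ρ)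
    -- Γ differentiable near x₀ with α-Hölder gradient
    (hΓdiff : ∀ x ∈ ball x0 ρ, DifferentiableAt ℝ Γ x)
    (hΓhold : ∀ x ∈ ball x0 ρ, ∀ y ∈ ball x0 ρ,
      ‖gradient Γ x - gradient Γ y‖ ≤ CΓ * ‖x - y‖ ^ α)
    (v : Rn n → ℝ → ℝ)
    -- v nonnegative in a neighbourhood of (x₀, Γ(x₀))
    (hv0 : ∀ (x : Rn n) (t : ℝ), ‖x - x0‖ < ρ → |t - Γ x0| < ρ → 0 ≤ v x t)
    -- v = 0 and ∂ₜv = 0 below the graph of Γ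
    (hzero : ∀ (x : Rn n) (t : ℝ), ‖x - x0‖ < ρ → |t - Γ x0| < ρ → t ≤ Γ x →
      v x t = 0 ∧ deriv (v x) t = 0)
    -- v continuously differentiable in t
    (hdiff : ∀ (x : Rn n), ‖x - x0‖ < ρ → ∀ t : ℝ, |t - Γ x0| < ρ →
      DifferentiableAt ℝ (v x) t)
    (hcont : ∀ (x : Rn n), ‖x - x0‖ < ρ →
      ContinuousOn (deriv (v x)) (Ioo (Γ x0 - ρ) (Γ x0 + ρ)))
    -- on {t ≥ Γ(x)}: ∂ₜv, ∇ₓ∂ₜv, ∂ₜₜv exist and are α-Hölder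
    (hreg : ∀ p ∈ Reg Γ x0 ρ,
      DifferentiableAt ℝ (fun y : Rn n => deriv (v y) p.2) p.1 ∧
      DifferentiableAt ℝ (deriv (v p.1)) p.2)
    (hhold : ∀ p ∈ Reg Γ x0 ρ, ∀ q ∈ Reg Γ x0 ρ,
      |deriv (v p.1) p.2 - deriv (v q.1) q.2|
          ≤ Cv * (‖p.1 - q.1‖ + |p.2 - q.2|) ^ α ∧
      ‖gradient (fun y : Rn n => deriv (v y) p.2) p.1
          - gradient (fun y : Rn n => deriv (v y) q.2) q.1‖
          ≤ Cv * (‖p.1 - q.1‖ + |p.2 - q.2|) ^ α ∧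
      |deriv (deriv (v p.1)) p.2 - deriv (deriv (v q.1)) q.2|
          ≤ Cv * (‖p.1 - q.1‖ + |p.2 - q.2|) ^ α) :
    ∃ C' : ℝ, 0 < C' ∧ ∃ r : ℝ, 0 < r ∧
      ∀ (x : Rn n) (t : ℝ), ‖x‖ ≤ r → |t| ≤ r →
        |deriv (v (x0 + x)) (Γ x0 + t)
            - deriv (deriv (v x0)) (Γ x0) * max (t - ⟪gradient Γ x0, x⟫) 0|
          ≤ C' * (|t| ^ (1 + α) + ‖x‖ ^ (1 + α)) ∧
        |v (x0 + x) (Γ x0 + t)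
            - deriv (deriv (v x0)) (Γ x0) / 2 * (max (t - ⟪gradient Γ x0, x⟫) 0) ^ 2|
          ≤ C' * (|t| ^ (2 + α) + ‖x‖ ^ (2 + α)) := by
  obtain ⟨hα0, hα1⟩ := hα
  set t0 := Γ x0 with ht0
  set a := gradient Γ x0 with ha
  set c0 := deriv (deriv (v x0)) t0 with hc0
  set K := ‖a‖ + |CΓ| + 1 with hK
  have hK1 : 1 ≤ K := by
    have h1 := norm_nonneg a; have h2 := abs_nonneg CΓ; rw [hK]; linarith
  set r := min (1/2 : ℝ) (ρ / (2 * K + 2)) with hr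
  have hr0 : 0 < r := lt_min (by norm_num) (div_pos hρ (by linarith))
  have hrhalf : r ≤ 1/2 := min_le_left _ _
  have hKr : K * r < ρ / 2 := by
    have h1 : r ≤ ρ / (2 * K + 2) := min_le_right _ _
    have h2 : K * r ≤ K * (ρ / (2 * K + 2)) :=
      mul_le_mul_of_nonneg_left h1 (by linarith)
    have h3 : K * (ρ / (2 * K + 2)) < ρ / 2 := by
      have e : K * (ρ / (2 * K + 2)) = (K * ρ) / (2 * K + 2) := by ring
      rw [e, div_lt_div_iff₀ (by linarith) (by norm_num : (0:ℝ) < 2)]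
      nlinarith
    linarith
  have hrρ : r < ρ := lt_of_le_of_lt (min_le_right _ _) (div_lt_self hρ (by linarith))
  set A1 := |Cv| * (K + 1) ^ (1 + α) + |c0| * |CΓ| with hA1
  set A2 := |Cv| * (K + 1) ^ (2 + α) + |c0| / 2 * |CΓ| * (2 * (K + 1) + |CΓ|)
      + |c0| / 2 * |CΓ| ^ 2 with hA2
  have hpow1nn : (0:ℝ) ≤ (K + 1) ^ (1 + α) := Real.rpow_nonneg (by linarith) _
  have hpow2nn : (0:ℝ) ≤ (K + 1) ^ (2 + α) := Real.rpow_nonneg (by linarith) _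
  have hA1nn : 0 ≤ A1 := by
    rw [hA1]
    exact add_nonneg (mul_nonneg (abs_nonneg _) hpow1nn)
      (mul_nonneg (abs_nonneg _) (abs_nonneg _))
  have hA2nn : 0 ≤ A2 := by
    rw [hA2]
    have h1 : (0:ℝ) ≤ |c0| / 2 * |CΓ| * (2 * (K + 1) + |CΓ|) := by
      apply mul_nonneg (mul_nonneg (by positivity) (abs_nonneg _))
      have := abs_nonneg CΓ; linarith
    have h2 : (0:ℝ) ≤ |c0| / 2 * |CΓ| ^ 2 := by positivity
    have h3 : (0:ℝ) ≤ |Cv| * (K + 1) ^ (2 + α) := mul_nonneg (abs_nonneg _) hpow2nn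
    linarith
  set C' := (A1 + A2 + 1) * 2 ^ (2 + α) with hC'
  have h2rp : (0:ℝ) < 2 ^ (2 + α) := Real.rpow_pos_of_pos (by norm_num) _
  have hC'pos : 0 < C' := by
    rw [hC']; exact mul_pos (by linarith) h2rp
  refine ⟨C', hC'pos, r, hr0, fun x t hx ht => ?_⟩
  have hxρ : ‖x‖ < ρ := lt_of_le_of_lt hx hrρ
  have hxρ' : ‖x0 + x - x0‖ < ρ := by simpa using hxρ
  have htρ : |t| < ρ := lt_of_le_of_lt ht hrρ
  have htρ' : |t0 + t - t0| < ρ := by simpa using htρ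
  have hΓT := gamma_taylor hα0 Γ x0 ρ CΓ hΓdiff hΓhold x hxρ
  rw [← ht0, ← ha] at hΓT
  have hxhalf : ‖x‖ ≤ 1/2 := hx.trans hrhalf
  have hthalf : |t| ≤ 1/2 := ht.trans hrhalf
  have hKxr : K * ‖x‖ ≤ K * r := mul_le_mul_of_nonneg_left hx (by linarith)
  set u := ‖x‖ + |t| with hu
  have hunn : 0 ≤ u := by rw [hu]; positivity
  have hu1 : u ≤ 1 := by rw [hu]; linarith
  have hxu : ‖x‖ ≤ u := by rw [hu]; linarith [abs_nonneg t]
  rcases eq_or_lt_of_le hunn with hu0 | hu0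
  · -- trivial case u = 0
    have hx0 : x = 0 := by
      have h1 := norm_nonneg x; have h2 := abs_nonneg t
      have h3 : ‖x‖ = 0 := by rw [hu] at hu0; linarith
      exact norm_eq_zero.mp h3
    have ht00 : t = 0 := by
      have h1 := norm_nonneg x; have h2 := abs_nonneg t
      have h3 : |t| = 0 := by rw [hu] at hu0; linarith
      exact abs_eq_zero.mp h3
    subst hx0; subst ht00
    have hz := hzero x0 t0 (by simpa using hρ) (by simpa using hρ) (le_of_eq ht0)
    have e1 : max ((0:ℝ) - ⟪a, (0 : Rn n)⟫) 0 = 0 := by simp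
    have e2 : (0:ℝ) ^ (1+α) = 0 := Real.zero_rpow (by linarith : (0:ℝ) < 1 + α).ne'
    have e3 : (0:ℝ) ^ (2+α) = 0 := Real.zero_rpow (by linarith : (0:ℝ) < 2 + α).ne'
    constructor
    · simp only [add_zero, e1, mul_zero, sub_zero, hz.2, abs_zero, norm_zero, e2]
      simp
    · simp only [add_zero, e1, mul_zero, zero_pow, hz.1, abs_zero, norm_zero, e3]
      simp
  have hupow : u ^ (1 + α) ≤ u := by
    calc u ^ (1 + α) ≤ u ^ (1 : ℝ) := Real.rpow_le_rpow_of_exponent_ge hu0 hu1 (by linarith)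
      _ = u := Real.rpow_one u
  have hurp1 : 0 ≤ u ^ (1 + α) := Real.rpow_nonneg hunn _
  have hurp2 : 0 ≤ u ^ (2 + α) := Real.rpow_nonneg hunn _
  have hxpow : ‖x‖ ^ (1 + α) ≤ u ^ (1 + α) :=
    Real.rpow_le_rpow (norm_nonneg x) hxu (by linarith)
  have hq : |(Γ (x0 + x) - t0) - ⟪a, x⟫| ≤ |CΓ| * u ^ (1 + α) :=
    hΓT.trans (mul_le_mul_of_nonneg_left hxpow (abs_nonneg _))
  set b := Γ (x0 + x) - t0 with hb
  have hxnpow : ‖x‖ ^ (1 + α) ≤ ‖x‖ := by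
    rcases eq_or_lt_of_le (norm_nonneg x) with h | h
    · rw [← h, Real.zero_rpow (by linarith : (0:ℝ) < 1 + α).ne']
    · calc ‖x‖ ^ (1 + α) ≤ ‖x‖ ^ (1 : ℝ) :=
          Real.rpow_le_rpow_of_exponent_ge h (by linarith) (by linarith)
        _ = ‖x‖ := Real.rpow_one _
  have hbabs : |b| ≤ K * ‖x‖ := by
    have h1 : |⟪a, x⟫| ≤ ‖a‖ * ‖x‖ := abs_real_inner_le_norm a x
    have h3 : |b| ≤ |b - ⟪a, x⟫| + |⟪a, x⟫| := by
      calc |b| = |(b - ⟪a, x⟫) + ⟪a, x⟫| := by congr 1; ring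
        _ ≤ _ := abs_add_le _ _
    have h4 : |b - ⟪a, x⟫| ≤ |CΓ| * ‖x‖ ^ (1 + α) := hΓT
    have h5 : |CΓ| * ‖x‖ ^ (1 + α) ≤ |CΓ| * ‖x‖ :=
      mul_le_mul_of_nonneg_left hxnpow (abs_nonneg _)
    have h6 : (‖a‖ + |CΓ|) * ‖x‖ ≤ K * ‖x‖ := by
      apply mul_le_mul_of_nonneg_right _ (norm_nonneg x)
      rw [hK]; linarith
    calc |b| ≤ |b - ⟪a, x⟫| + |⟪a, x⟫| := h3
      _ ≤ |CΓ| * ‖x‖ + ‖a‖ * ‖x‖ := add_le_add (h4.trans h5) h1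
      _ = (‖a‖ + |CΓ|) * ‖x‖ := by ring
      _ ≤ K * ‖x‖ := h6
  have hbρ : |b| < ρ := by
    have h9 : |b| < ρ / 2 := lt_of_le_of_lt (hbabs.trans hKxr) hKr
    linarith
  have hclaims : |deriv (v (x0 + x)) (t0 + t) - c0 * max (t - ⟪a, x⟫) 0| ≤ A1 * u ^ (1 + α)
      ∧ |v (x0 + x) (t0 + t) - c0 / 2 * (max (t - ⟪a, x⟫) 0) ^ 2| ≤ A2 * u ^ (2 + α) := by
    by_cases hcase : Γ (x0 + x) ≤ t0 + t
    · -- above the free boundary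
      have hbt : b ≤ t := by rw [hb]; linarith
      have hΓeq : t0 + b = Γ (x0 + x) := by rw [hb]; ring
      set M := |Cv| * ((K + 1) * u) ^ α with hM
      have hKu : 0 < (K + 1) * u := mul_pos (by linarith) hu0
      have hMnn : 0 ≤ M := by
        rw [hM]; exact mul_nonneg (abs_nonneg _) (Real.rpow_nonneg hKu.le _)
      have hsρ : ∀ s, t0 + b ≤ s → s ≤ t0 + t → |s - t0| < ρ := by
        intro s h1 h2
        rw [abs_lt]
        constructor
        · have h5 := neg_abs_le b
          linarith
        · linarith [le_abs_self t]
      have hsmem : ∀ s ∈ Icc (t0 + b) (t0 + t), (x0 + x, s) ∈ Reg Γ x0 ρ := by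
        intro s hs
        simp only [Reg, Set.mem_setOf_eq]
        exact ⟨by simpa using hxρ, hsρ s hs.1 hs.2, hΓeq ▸ hs.1⟩
      have hq0mem : (x0, t0) ∈ Reg Γ x0 ρ := by
        simp only [Reg, Set.mem_setOf_eq]
        exact ⟨by simpa using hρ, by rw [ht0]; simpa using hρ, le_of_eq ht0.symm⟩
      have hwz : deriv (v (x0 + x)) (t0 + b) = 0 := by
        have hbρ2 : |t0 + b - t0| < ρ := by simpa using hbρ
        exact (hzero (x0 + x) (t0 + b) hxρ' hbρ2 (le_of_eq hΓeq)).2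
      have hest : ∀ s ∈ Icc (t0 + b) (t0 + t),
          |deriv (v (x0 + x)) s - c0 * (s - (t0 + b))| ≤ M * (s - (t0 + b)) := by
        have hmvt := norm_image_sub_le_of_norm_deriv_le_segment'
          (f := fun s => deriv (v (x0 + x)) s - c0 * (s - (t0 + b)))
          (f' := fun s => deriv (deriv (v (x0 + x))) s - c0)
          (a := t0 + b) (b := t0 + t) (C := M) ?_ ?_
        · intro s hs
          have h := hmvt s hs
          simpa [hwz] using h
        · intro s hs
          have h1 : HasDerivAt (deriv (v (x0 + x))) (deriv (deriv (v (x0 + x))) s) s :=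
            ((hreg (x0 + x, s) (hsmem s hs)).2).hasDerivAt
          have h2 : HasDerivAt (fun s => c0 * (s - (t0 + b))) c0 s := by
            simpa using ((hasDerivAt_id s).sub_const (t0 + b)).const_mul c0
          exact (h1.sub h2).hasDerivWithinAt
        · intro s hs
          have hs' : s ∈ Icc (t0 + b) (t0 + t) := Ico_subset_Icc_self hs
          have h3 := (hhold (x0 + x, s) (hsmem s hs') (x0, t0) hq0mem).2.2
          simp only [add_sub_cancel_left] at h3
          rw [← hc0] at h3
          have hbase : ‖x‖ + |s - t0| ≤ (K + 1) * u := by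
            have h4 : |s - t0| ≤ |b| + |t| := by
              rw [abs_le]
              constructor
              · have h5 := neg_abs_le b
                have h6 := abs_nonneg t
                linarith [hs'.1]
              · linarith [le_abs_self t, hs'.2, abs_nonneg b]
            have e : (K + 1) * u = K * ‖x‖ + ‖x‖ + K * |t| + |t| := by rw [hu]; ring
            have h7 : 0 ≤ K * |t| := mul_nonneg (by linarith) (abs_nonneg t)
            rw [e]; linarith
          have h5 : Cv * (‖x‖ + |s - t0|) ^ α ≤ M := by
            calc Cv * (‖x‖ + |s - t0|) ^ α ≤ |Cv| * (‖x‖ + |s - t0|) ^ α :=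
                  mul_le_mul_of_nonneg_right (le_abs_self Cv)
                    (Real.rpow_nonneg (by positivity) α)
              _ ≤ |Cv| * ((K + 1) * u) ^ α := by
                  apply mul_le_mul_of_nonneg_left _ (abs_nonneg Cv)
                  exact Real.rpow_le_rpow (by positivity) hbase hα0.le
          calc ‖deriv (deriv (v (x0 + x))) s - c0‖
              = |deriv (deriv (v (x0 + x))) s - c0| := Real.norm_eq_abs _
            _ ≤ Cv * (‖x‖ + |s - t0|) ^ α := h3
            _ ≤ M := h5
      have hkey1 : |deriv (v (x0 + x)) (t0 + t) - c0 * (t - b)| ≤ M * (t - b) := by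
        have h := hest (t0 + t) ⟨by linarith, le_refl _⟩
        have e : (t0 + t) - (t0 + b) = t - b := by ring
        rwa [e] at h
      have htbu : t - b ≤ (K + 1) * u := by
        have e : (K + 1) * u = K * ‖x‖ + ‖x‖ + K * |t| + |t| := by rw [hu]; ring
        have h7 : 0 ≤ K * |t| := mul_nonneg (by linarith) (abs_nonneg t)
        rw [e]
        linarith only [h7, le_abs_self t, neg_abs_le b, hbabs, norm_nonneg x]
      have htb0 : 0 ≤ t - b := by linarith
      have hMtb : M * (t - b) ≤ |Cv| * (K + 1) ^ (1 + α) * u ^ (1 + α) := by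
        have h2 : ((K + 1) * u) ^ α * ((K + 1) * u) = ((K + 1) * u) ^ (1 + α) := by
          rw [add_comm 1 α, Real.rpow_add_one hKu.ne' α]
        have h3 : ((K + 1) * u) ^ (1 + α) = (K + 1) ^ (1 + α) * u ^ (1 + α) :=
          Real.mul_rpow (by linarith) hunn
        calc M * (t - b) ≤ M * ((K + 1) * u) := mul_le_mul_of_nonneg_left htbu hMnn
          _ = |Cv| * (((K + 1) * u) ^ α * ((K + 1) * u)) := by rw [hM]; ring
          _ = |Cv| * ((K + 1) ^ (1 + α) * u ^ (1 + α)) := by rw [h2, h3]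
          _ = |Cv| * (K + 1) ^ (1 + α) * u ^ (1 + α) := by ring
      have hmaxeq : max (t - b) 0 = t - b := max_eq_left htb0
      have hmaxd : |max (t - b) 0 - max (t - ⟪a, x⟫) 0| ≤ |CΓ| * u ^ (1 + α) := by
        calc |max (t - b) 0 - max (t - ⟪a, x⟫) 0| ≤ |(t - b) - (t - ⟪a, x⟫)| :=
              abs_max_sub_max_le_abs _ _ _
          _ = |b - ⟪a, x⟫| := by rw [abs_sub_comm]; congr 1; ring
          _ ≤ |CΓ| * u ^ (1 + α) := hq
      have claim1 : |deriv (v (x0 + x)) (t0 + t) - c0 * max (t - ⟪a, x⟫) 0|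
          ≤ A1 * u ^ (1 + α) := by
        have e : deriv (v (x0 + x)) (t0 + t) - c0 * max (t - ⟪a, x⟫) 0
            = (deriv (v (x0 + x)) (t0 + t) - c0 * (t - b))
              + c0 * (max (t - b) 0 - max (t - ⟪a, x⟫) 0) := by
          rw [hmaxeq]; ring
        calc |deriv (v (x0 + x)) (t0 + t) - c0 * max (t - ⟪a, x⟫) 0|
            ≤ |deriv (v (x0 + x)) (t0 + t) - c0 * (t - b)|
              + |c0| * |max (t - b) 0 - max (t - ⟪a, x⟫) 0| := by
              rw [e]; refine (abs_add_le _ _).trans ?_; rw [abs_mul]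
          _ ≤ M * (t - b) + |c0| * (|CΓ| * u ^ (1 + α)) :=
              add_le_add hkey1 (mul_le_mul_of_nonneg_left hmaxd (abs_nonneg c0))
          _ ≤ |Cv| * (K + 1) ^ (1 + α) * u ^ (1 + α) + |c0| * |CΓ| * u ^ (1 + α) := by
              linarith [hMtb]
          _ = A1 * u ^ (1 + α) := by rw [hA1]; ring
      -- second order
      have hvz : v (x0 + x) (t0 + b) = 0 := by
        have hbρ2 : |t0 + b - t0| < ρ := by simpa using hbρ
        exact (hzero (x0 + x) (t0 + b) hxρ' hbρ2 (le_of_eq hΓeq)).1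
      have hest2 : |v (x0 + x) (t0 + t) - c0 / 2 * (t - b) ^ 2| ≤ M * (t - b) * (t - b) := by
        have hmvt := norm_image_sub_le_of_norm_deriv_le_segment'
          (f := fun s => v (x0 + x) s - c0 / 2 * (s - (t0 + b)) ^ 2)
          (f' := fun s => deriv (v (x0 + x)) s - c0 * (s - (t0 + b)))
          (a := t0 + b) (b := t0 + t) (C := M * (t - b)) ?_ ?_ (t0 + t)
          ⟨by linarith, le_refl _⟩
        · have e : (t0 + t) - (t0 + b) = t - b := by ring
          rw [e] at hmvt
          simpa [hvz] using hmvt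
        · intro s hs
          have hsρ2 : |s - t0| < ρ := hsρ s hs.1 hs.2
          have h1 : HasDerivAt (v (x0 + x)) (deriv (v (x0 + x)) s) s :=
            (hdiff (x0 + x) hxρ' s hsρ2).hasDerivAt
          have h2 : HasDerivAt (fun s => c0 / 2 * (s - (t0 + b)) ^ 2)
              (c0 * (s - (t0 + b))) s := by
            have h3 := (((hasDerivAt_id s).sub_const (t0 + b)).pow 2).const_mul (c0 / 2)
            convert h3 using 1
            · rfl
            · rfl
            · simp
            · simp; ring
          exact (h1.sub h2).hasDerivWithinAt
        · intro s hs
          have hs' : s ∈ Icc (t0 + b) (t0 + t) := Ico_subset_Icc_self hs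
          calc ‖deriv (v (x0 + x)) s - c0 * (s - (t0 + b))‖
              = |deriv (v (x0 + x)) s - c0 * (s - (t0 + b))| := Real.norm_eq_abs _
            _ ≤ M * (s - (t0 + b)) := hest s hs'
            _ ≤ M * (t - b) := by
                apply mul_le_mul_of_nonneg_left _ hMnn
                linarith [hs'.2]
      have hMtb2 : M * (t - b) * (t - b) ≤ |Cv| * (K + 1) ^ (2 + α) * u ^ (2 + α) := by
        have h1 : (t - b) * (t - b) ≤ ((K + 1) * u) * ((K + 1) * u) :=
          mul_le_mul htbu htbu htb0 hKu.le
        have e2 : ((K + 1) * u) ^ ((2 : ℝ)) = ((K + 1) * u) * ((K + 1) * u) := by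
          rw [show ((2 : ℝ)) = ((2 : ℕ) : ℝ) by norm_num, Real.rpow_natCast]; ring
        have h2 : ((K + 1) * u) ^ α * (((K + 1) * u) * ((K + 1) * u))
            = ((K + 1) * u) ^ (2 + α) := by
          rw [← e2, ← Real.rpow_add hKu]; congr 1; ring
        calc M * (t - b) * (t - b)
            = |Cv| * (((K + 1) * u) ^ α) * ((t - b) * (t - b)) := by rw [hM]; ring
          _ ≤ |Cv| * (((K + 1) * u) ^ α) * (((K + 1) * u) * ((K + 1) * u)) := by
              apply mul_le_mul_of_nonneg_left h1
                (mul_nonneg (abs_nonneg _) (Real.rpow_nonneg hKu.le _))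
          _ = |Cv| * ((K + 1) * u) ^ (2 + α) := by rw [mul_assoc, h2]
          _ = |Cv| * (K + 1) ^ (2 + α) * u ^ (2 + α) := by
              rw [Real.mul_rpow (by linarith) hunn]; ring
      set Q := max (t - ⟪a, x⟫) 0 with hQ
      have hQnn : 0 ≤ Q := le_max_right _ _
      have hPQ : |(t - b) - Q| ≤ |CΓ| * u ^ (1 + α) := by rw [← hmaxeq]; exact hmaxd
      have hQle : Q ≤ (K + 1) * u + |CΓ| * u := by
        have h1 : Q - (t - b) ≤ |(t - b) - Q| := by
          rw [abs_sub_comm]; exact le_abs_self _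
        have h2 : |CΓ| * u ^ (1 + α) ≤ |CΓ| * u :=
          mul_le_mul_of_nonneg_left hupow (abs_nonneg _)
        linarith
      have hsq : |(t - b) ^ 2 - Q ^ 2| ≤ (|CΓ| * u ^ (1 + α)) * (2 * (K + 1) * u + |CΓ| * u) := by
        have e : (t - b) ^ 2 - Q ^ 2 = ((t - b) - Q) * ((t - b) + Q) := by ring
        rw [e, abs_mul]
        apply mul_le_mul hPQ _ (abs_nonneg _) (mul_nonneg (abs_nonneg _) hurp1)
        rw [abs_of_nonneg (by linarith : (0:ℝ) ≤ (t - b) + Q)]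
        linarith
      have hu21 : u ^ (1 + α) * u = u ^ (2 + α) := by
        rw [← Real.rpow_add_one hu0.ne' (1 + α)]
        congr 1; ring
      have claim2 : |v (x0 + x) (t0 + t) - c0 / 2 * Q ^ 2| ≤ A2 * u ^ (2 + α) := by
        have e : v (x0 + x) (t0 + t) - c0 / 2 * Q ^ 2
            = (v (x0 + x) (t0 + t) - c0 / 2 * (t - b) ^ 2)
              + c0 / 2 * ((t - b) ^ 2 - Q ^ 2) := by ring
        have tri : |v (x0 + x) (t0 + t) - c0 / 2 * Q ^ 2|
            ≤ |v (x0 + x) (t0 + t) - c0 / 2 * (t - b) ^ 2|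
              + |c0| / 2 * |(t - b) ^ 2 - Q ^ 2| := by
          rw [e]
          refine (abs_add_le _ _).trans ?_
          rw [abs_mul, abs_div, abs_two]
        have h6 : |c0| / 2 * |(t - b) ^ 2 - Q ^ 2|
            ≤ |c0| / 2 * ((|CΓ| * u ^ (1 + α)) * (2 * (K + 1) * u + |CΓ| * u)) :=
          mul_le_mul_of_nonneg_left hsq (by positivity)
        have h7 : |c0| / 2 * ((|CΓ| * u ^ (1 + α)) * (2 * (K + 1) * u + |CΓ| * u))
            = |c0| / 2 * |CΓ| * (2 * (K + 1) + |CΓ|) * u ^ (2 + α) := by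
          rw [← hu21]; ring
        have h8 : 0 ≤ |c0| / 2 * |CΓ| ^ 2 * u ^ (2 + α) := by
          apply mul_nonneg _ hurp2
          positivity
        have e9 : A2 * u ^ (2 + α) = |Cv| * (K + 1) ^ (2 + α) * u ^ (2 + α)
            + |c0| / 2 * |CΓ| * (2 * (K + 1) + |CΓ|) * u ^ (2 + α)
            + |c0| / 2 * |CΓ| ^ 2 * u ^ (2 + α) := by rw [hA2]; ring
        calc |v (x0 + x) (t0 + t) - c0 / 2 * Q ^ 2|
            ≤ M * (t - b) * (t - b)
              + |c0| / 2 * ((|CΓ| * u ^ (1 + α)) * (2 * (K + 1) * u + |CΓ| * u)) := by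
              linarith [tri, hest2, h6]
          _ = M * (t - b) * (t - b)
              + |c0| / 2 * |CΓ| * (2 * (K + 1) + |CΓ|) * u ^ (2 + α) := by rw [h7]
          _ ≤ A2 * u ^ (2 + α) := by
              rw [e9]
              exact (add_le_add_left hMtb2 _).trans (le_add_of_nonneg_right h8)
      exact ⟨claim1, claim2⟩
    · -- below the free boundary
      push_neg at hcase
      have hz := hzero (x0 + x) (t0 + t) hxρ' htρ' hcase.le
      have hQle : max (t - ⟪a, x⟫) 0 ≤ |CΓ| * u ^ (1 + α) := by
        apply max_le _ (mul_nonneg (abs_nonneg _) hurp1)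
        have h1 : b - ⟪a, x⟫ ≤ |CΓ| * u ^ (1 + α) := (le_abs_self _).trans hq
        have h2 : t - b < 0 := by rw [hb]; linarith
        linarith
      have hQnn : 0 ≤ max (t - ⟪a, x⟫) 0 := le_max_right _ _
      have hterm1 : 0 ≤ |Cv| * (K + 1) ^ (1 + α) * u ^ (1 + α) :=
        mul_nonneg (mul_nonneg (abs_nonneg _) hpow1nn) hurp1
      have hterm2 : 0 ≤ |Cv| * (K + 1) ^ (2 + α) * u ^ (2 + α) :=
        mul_nonneg (mul_nonneg (abs_nonneg _) hpow2nn) hurp2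
      have hterm3 : 0 ≤ |c0| / 2 * |CΓ| * (2 * (K + 1) + |CΓ|) * u ^ (2 + α) := by
        apply mul_nonneg _ hurp2
        apply mul_nonneg (mul_nonneg (by positivity) (abs_nonneg _))
        have := abs_nonneg CΓ; linarith
      constructor
      · rw [hz.2]
        have e : |0 - c0 * max (t - ⟪a, x⟫) 0| = |c0| * max (t - ⟪a, x⟫) 0 := by
          rw [zero_sub, abs_neg, abs_mul, abs_of_nonneg hQnn]
        rw [e]
        have e2 : A1 * u ^ (1 + α) = |Cv| * (K + 1) ^ (1 + α) * u ^ (1 + α)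
            + |c0| * |CΓ| * u ^ (1 + α) := by rw [hA1]; ring
        calc |c0| * max (t - ⟪a, x⟫) 0 ≤ |c0| * (|CΓ| * u ^ (1 + α)) :=
            mul_le_mul_of_nonneg_left hQle (abs_nonneg _)
          _ = |c0| * |CΓ| * u ^ (1 + α) := by ring
          _ ≤ A1 * u ^ (1 + α) := by rw [e2]; linarith
      · rw [hz.1]
        have e : |0 - c0 / 2 * (max (t - ⟪a, x⟫) 0) ^ 2|
            = |c0| / 2 * (max (t - ⟪a, x⟫) 0) ^ 2 := by
          rw [zero_sub, abs_neg, abs_mul, abs_div, abs_two, abs_of_nonneg (sq_nonneg (max (t - ⟪a, x⟫) 0))]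
        rw [e]
        have hsq : (max (t - ⟪a, x⟫) 0) ^ 2 ≤ |CΓ| ^ 2 * u ^ (2 + α) := by
          have h1 : (max (t - ⟪a, x⟫) 0) ^ 2 ≤ (|CΓ| * u ^ (1 + α)) ^ 2 :=
            pow_le_pow_left₀ hQnn hQle 2
          have h3 : (u ^ (1 + α)) ^ (2:ℕ) = u ^ (2 + 2 * α) := by
            rw [← Real.rpow_natCast (u ^ (1 + α)) 2, ← Real.rpow_mul hunn]
            congr 1; push_cast; ring
          have h4 : u ^ (2 + 2 * α) ≤ u ^ (2 + α) :=
            Real.rpow_le_rpow_of_exponent_ge hu0 hu1 (by linarith)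
          calc (max (t - ⟪a, x⟫) 0) ^ 2 ≤ (|CΓ| * u ^ (1 + α)) ^ 2 := h1
            _ = |CΓ| ^ 2 * (u ^ (1 + α)) ^ (2:ℕ) := by ring
            _ = |CΓ| ^ 2 * u ^ (2 + 2 * α) := by rw [h3]
            _ ≤ |CΓ| ^ 2 * u ^ (2 + α) := mul_le_mul_of_nonneg_left h4 (by positivity)
        have e9 : A2 * u ^ (2 + α) = |Cv| * (K + 1) ^ (2 + α) * u ^ (2 + α)
            + |c0| / 2 * |CΓ| * (2 * (K + 1) + |CΓ|) * u ^ (2 + α)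
            + |c0| / 2 * (|CΓ| ^ 2 * u ^ (2 + α)) := by rw [hA2]; ring
        calc |c0| / 2 * (max (t - ⟪a, x⟫) 0) ^ 2
            ≤ |c0| / 2 * (|CΓ| ^ 2 * u ^ (2 + α)) :=
            mul_le_mul_of_nonneg_left hsq (by positivity)
          _ ≤ A2 * u ^ (2 + α) := by rw [e9]; linarith
  obtain ⟨claim1, claim2⟩ := hclaims
  have hS1 : 0 ≤ |t| ^ (1 + α) + ‖x‖ ^ (1 + α) := by positivity
  have hS2 : 0 ≤ |t| ^ (2 + α) + ‖x‖ ^ (2 + α) := by positivity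
  have h2pow : (2:ℝ) ^ (1 + α) ≤ 2 ^ (2 + α) :=
    Real.rpow_le_rpow_of_exponent_le one_le_two (by linarith)
  have h2pownn : (0:ℝ) ≤ 2 ^ (1 + α) := by positivity
  have hsplit1 : u ^ (1 + α) ≤ 2 ^ (1 + α) * (|t| ^ (1 + α) + ‖x‖ ^ (1 + α)) := by
    have h := rpow_split (abs_nonneg t) (norm_nonneg x) (p := 1 + α) (by linarith)
    calc u ^ (1 + α) = (|t| + ‖x‖) ^ (1 + α) := by rw [hu]; congr 1; ring
      _ ≤ _ := h
  have hsplit2 : u ^ (2 + α) ≤ 2 ^ (2 + α) * (|t| ^ (2 + α) + ‖x‖ ^ (2 + α)) := by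
    have h := rpow_split (abs_nonneg t) (norm_nonneg x) (p := 2 + α) (by linarith)
    calc u ^ (2 + α) = (|t| + ‖x‖) ^ (2 + α) := by rw [hu]; congr 1; ring
      _ ≤ _ := h
  constructor
  · have h9 : A1 * 2 ^ (1 + α) ≤ (A1 + A2 + 1) * 2 ^ (2 + α) := by
      calc A1 * 2 ^ (1 + α) ≤ A1 * 2 ^ (2 + α) := mul_le_mul_of_nonneg_left h2pow hA1nn
        _ ≤ (A1 + A2 + 1) * 2 ^ (2 + α) :=
            mul_le_mul_of_nonneg_right (by linarith) h2rp.le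
    calc |deriv (v (x0 + x)) (t0 + t) - c0 * max (t - ⟪a, x⟫) 0|
        ≤ A1 * u ^ (1 + α) := claim1
      _ ≤ A1 * (2 ^ (1 + α) * (|t| ^ (1 + α) + ‖x‖ ^ (1 + α))) :=
          mul_le_mul_of_nonneg_left hsplit1 hA1nn
      _ = (A1 * 2 ^ (1 + α)) * (|t| ^ (1 + α) + ‖x‖ ^ (1 + α)) := by ring
      _ ≤ ((A1 + A2 + 1) * 2 ^ (2 + α)) * (|t| ^ (1 + α) + ‖x‖ ^ (1 + α)) :=
          mul_le_mul_of_nonneg_right h9 hS1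
      _ = C' * (|t| ^ (1 + α) + ‖x‖ ^ (1 + α)) := by rw [hC']
  · have h9 : A2 * 2 ^ (2 + α) ≤ (A1 + A2 + 1) * 2 ^ (2 + α) :=
      mul_le_mul_of_nonneg_right (by linarith) h2rp.le
    calc |v (x0 + x) (t0 + t) - c0 / 2 * (max (t - ⟪a, x⟫) 0) ^ 2|
        ≤ A2 * u ^ (2 + α) := claim2
      _ ≤ A2 * (2 ^ (2 + α) * (|t| ^ (2 + α) + ‖x‖ ^ (2 + α))) :=
          mul_le_mul_of_nonneg_left hsplit2 hA2nn
      _ = (A2 * 2 ^ (2 + α)) * (|t| ^ (2 + α) + ‖x‖ ^ (2 + α)) := by ring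
      _ ≤ ((A1 + A2 + 1) * 2 ^ (2 + α)) * (|t| ^ (2 + α) + ‖x‖ ^ (2 + α)) :=
          mul_le_mul_of_nonneg_right h9 hS2
      _ = C' * (|t| ^ (2 + α) + ‖x‖ ^ (2 + α)) := by rw [hC']

end
end

section
/- Let ε > 0, T > 0, and set β_ε(z) = e^{−z/ε}. Let φ, ψ, u₀, v₀ : ℝ^n → ℝ and f, g : ℝ^n × (0,T) → ℝ be bounded and uniformly Lipschitz, and let u, v : ℝ^n × [0,T] → ℝ be bounded, uniformly Lipschitz, continuous, continuously differentiable in t on ℝ^n × (0,T), and satisfy pointwise ∂_t u + Lu = β_ε(u − φ) + f and ∂_t v + Lv = β_ε(v − ψ) + g on ℝ^n × (0,T), with u(·,0) = u₀ and v(·,0) = v₀. If u₀ ≤ v₀, φ ≤ ψ and f ≤ g, then u ≤ v on ℝ^n × (0,T). -/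
open MeasureTheory Set Metric

noncomputable section

/-- Bounded and uniformly Lipschitz function on `ℝⁿ`. -/
def BddLip {n : ℕ} (f : Rn n → ℝ) : Prop :=
  ∃ M : ℝ, (∀ x, |f x| ≤ M) ∧ ∀ x y, |f x - f y| ≤ M * ‖x - y‖

/-- Bounded and uniformly Lipschitz function on `ℝⁿ × (0,T)`. -/
def BddLipT {n : ℕ} (T : ℝ) (f : Rn n → ℝ → ℝ) : Prop :=
  ∃ M : ℝ, (∀ x t, t ∈ Ioo 0 T → |f x t| ≤ M) ∧
    ∀ (x x' : Rn n), ∀ t ∈ Ioo (0:ℝ) T, ∀ t' ∈ Ioo (0:ℝ) T,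
      |f x t - f x' t'| ≤ M * (‖x - x'‖ + |t - t'|)

/-- Bounded and uniformly Lipschitz function on `ℝⁿ × [0,T]`. -/
def BddLipIcc {n : ℕ} (T : ℝ) (f : Rn n → ℝ → ℝ) : Prop :=
  ∃ M : ℝ, (∀ x t, t ∈ Icc 0 T → |f x t| ≤ M) ∧
    ∀ (x x' : Rn n), ∀ t ∈ Icc (0:ℝ) T, ∀ t' ∈ Icc (0:ℝ) T,
      |f x t - f x' t'| ≤ M * (‖x - x'‖ + |t - t'|)

namespace Stmt16

/-- The radial dominating function. -/
noncomputable def gker (n : ℕ) (s : ℝ) : Rn n → ℝ := fun y => min ‖y‖ 1 * ‖y‖ ^ (-(n:ℝ) - 2*s)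

lemma gker_nonneg {n : ℕ} {s : ℝ} (y : Rn n) : 0 ≤ gker n s y :=
  mul_nonneg (le_min (norm_nonneg _) zero_le_one) (Real.rpow_nonneg (norm_nonneg _) _)

lemma gker_zero {n : ℕ} {s : ℝ} : gker n s (0 : Rn n) = 0 := by
  simp [gker, min_eq_left (zero_le_one' ℝ)]

lemma gker_meas {n : ℕ} {s : ℝ} : Measurable (gker n s) := by
  unfold gker; fun_prop

lemma half_pow_calc (p : ℝ) (n k : ℕ) :
    ((1/2:ℝ))^k * (((1/2:ℝ))^(k+1)) ^ p * (((1/2:ℝ))^k)^n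
      = (1/2:ℝ)^p * ((1/2:ℝ) ^ (1 + p + (n:ℝ)))^k := by
  have h2 : (0:ℝ) < 1/2 := by norm_num
  have h2' : (0:ℝ) ≤ 1/2 := h2.le
  have e1 : ((1/2:ℝ))^k = (1/2:ℝ) ^ ((k:ℝ)) := by rw [Real.rpow_natCast]
  have e2 : ((1/2:ℝ))^(k+1) = (1/2:ℝ) ^ ((k:ℝ)+1) := by
    rw [show ((k:ℝ)+1) = ((k+1 : ℕ) : ℝ) by push_cast; ring, Real.rpow_natCast]
  rw [e1, e2, ← Real.rpow_natCast ((1/2:ℝ) ^ ((k:ℝ))) n,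
      ← Real.rpow_mul h2', ← Real.rpow_mul h2', ← Real.rpow_add h2, ← Real.rpow_add h2,
      show (k:ℝ) + ((k:ℝ)+1)*p + (k:ℝ)*(n:ℝ) = p + (1+p+(n:ℝ))*(k:ℝ) by ring,
      Real.rpow_add h2, Real.rpow_mul h2', Real.rpow_natCast]

lemma mem_annuli {n : ℕ} {y : Rn n} (h0 : y ≠ 0) (h1 : ‖y‖ < 1) :
    ∃ k : ℕ, (1/2:ℝ)^(k+1) ≤ ‖y‖ ∧ ‖y‖ < (1/2:ℝ)^k := by
  have hy : 0 < ‖y‖ := norm_pos_iff.2 h0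
  obtain ⟨m, hm⟩ := exists_pow_lt_of_lt_one hy (by norm_num : (1/2:ℝ) < 1)
  have hex : ∃ k, (1/2:ℝ)^(k+1) ≤ ‖y‖ :=
    ⟨m, le_of_lt (lt_of_le_of_lt (pow_le_pow_of_le_one (by norm_num) (by norm_num)
      (Nat.le_succ m)) hm)⟩
  classical
  refine ⟨Nat.find hex, Nat.find_spec hex, ?_⟩
  rcases Nat.eq_zero_or_pos (Nat.find hex) with hk | hk
  · rw [hk]; simpa using h1
  · have hmin := Nat.find_min hex (Nat.sub_lt hk one_pos)
    have he : Nat.find hex - 1 + 1 = Nat.find hex := Nat.succ_pred_eq_of_pos hk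
    rw [he] at hmin
    exact lt_of_not_ge hmin


variable {n : ℕ} {s : ℝ}

lemma gker_integrableOn_inner (hs : 0 < s) (hs2 : s < 1/2) :
    IntegrableOn (gker n s) (ball (0:Rn n) 1 \ {0}) := by
  set p : ℝ := -(n:ℝ) - 2*s with hp
  have hpneg : p < 0 := by rw [hp]; push_cast; nlinarith [Nat.cast_nonneg (α := ℝ) n]
  have h1pn : 0 < 1 + p + (n:ℝ) := by rw [hp]; push_cast; nlinarith
  set q : ℝ := (1/2:ℝ) ^ (1 + p + (n:ℝ)) with hq
  have hq0 : 0 ≤ q := Real.rpow_nonneg (by norm_num) _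
  have hq1 : q < 1 := Real.rpow_lt_one (by norm_num) (by norm_num) h1pn
  set A : ℕ → Set (Rn n) := fun k =>
    (fun y : Rn n => ‖y‖) ⁻¹' (Ico ((1/2:ℝ)^(k+1)) ((1/2:ℝ)^k)) with hA
  refine ⟨gker_meas.aestronglyMeasurable.restrict, ?_⟩
  rw [hasFiniteIntegral_iff_ofReal (ae_of_all _ gker_nonneg)]
  have hsub : ball (0:Rn n) 1 \ {0} ⊆ ⋃ k, A k := by
    rintro y ⟨hy1, hy0⟩
    obtain ⟨k, hk1, hk2⟩ := mem_annuli (by simpa using hy0) (mem_ball_zero_iff.1 hy1)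
    exact mem_iUnion.2 ⟨k, ⟨hk1, hk2⟩⟩
  calc ∫⁻ y in ball (0:Rn n) 1 \ {0}, ENNReal.ofReal (gker n s y)
      ≤ ∫⁻ y in ⋃ k, A k, ENNReal.ofReal (gker n s y) := lintegral_mono_set hsub
    _ ≤ ∑' k, ∫⁻ y in A k, ENNReal.ofReal (gker n s y) := lintegral_iUnion_le _ _
    _ ≤ ∑' k : ℕ, ENNReal.ofReal ((1/2:ℝ)^p * q^k) * volume (ball (0:Rn n) 1) := by
        refine ENNReal.tsum_le_tsum fun k => ?_
        have hb : ∀ y ∈ A k, gker n s y ≤ (1/2:ℝ)^k * ((1/2:ℝ)^(k+1)) ^ p := by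
          intro y hy
          have hy1 : (1/2:ℝ)^(k+1) ≤ ‖y‖ := hy.1
          have hy2 : ‖y‖ < (1/2:ℝ)^k := hy.2
          refine mul_le_mul ((min_le_left _ _).trans hy2.le)
            (Real.rpow_le_rpow_of_nonpos (pow_pos (by norm_num) _) hy1 hpneg.le)
            (Real.rpow_nonneg (norm_nonneg _) _) (by positivity)
        calc ∫⁻ y in A k, ENNReal.ofReal (gker n s y)
            ≤ ∫⁻ _y in A k, ENNReal.ofReal ((1/2:ℝ)^k * ((1/2:ℝ)^(k+1)) ^ p) := by
              refine setLIntegral_mono measurable_const fun y hy =>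
                ENNReal.ofReal_le_ofReal (hb y hy)
          _ = ENNReal.ofReal ((1/2:ℝ)^k * ((1/2:ℝ)^(k+1)) ^ p) * volume (A k) :=
              setLIntegral_const _ _
          _ ≤ ENNReal.ofReal ((1/2:ℝ)^k * ((1/2:ℝ)^(k+1)) ^ p) *
                volume (ball (0:Rn n) ((1/2:ℝ)^k)) := by
              exact mul_le_mul_right (measure_mono fun y hy => mem_ball_zero_iff.2 hy.2) _
          _ = ENNReal.ofReal ((1/2:ℝ)^p * q^k) * volume (ball (0:Rn n) 1) := by
              have hball := Measure.addHaar_ball_mul_of_pos (volume : Measure (Rn n)) 0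
                (pow_pos (by norm_num : (0:ℝ) < 1/2) k) 1
              rw [mul_one] at hball
              rw [hball, finrank_euclideanSpace_fin, ← mul_assoc,
                ← ENNReal.ofReal_mul (by positivity), half_pow_calc]
    _ < ⊤ := by
        have : ∀ k : ℕ, ENNReal.ofReal ((1/2:ℝ)^p * q^k) =
            ENNReal.ofReal ((1/2:ℝ)^p) * (ENNReal.ofReal q)^k := by
          intro k
          rw [ENNReal.ofReal_mul (Real.rpow_nonneg (by norm_num) _), ENNReal.ofReal_pow hq0]
        simp_rw [this]
        rw [ENNReal.tsum_mul_right, ENNReal.tsum_mul_left, ENNReal.tsum_geometric]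
        have h1 : ENNReal.ofReal q < 1 := ENNReal.ofReal_lt_one.2 hq1
        have h2 : (1 - ENNReal.ofReal q)⁻¹ ≠ ⊤ :=
          (ENNReal.inv_lt_top.2 (tsub_pos_iff_lt.2 h1)).ne
        exact ENNReal.mul_lt_top
          (ENNReal.mul_lt_top ENNReal.ofReal_lt_top (lt_top_iff_ne_top.2 h2))
          measure_ball_lt_top

lemma rpow_neg_le_aux {a r : ℝ} (h1 : 1 ≤ a) (hr : 0 < r) :
    a ^ (-r) ≤ 2^r * (1+a)^(-r) := by
  have ha : (0:ℝ) < a := lt_of_lt_of_le one_pos h1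
  have hb : (0:ℝ) < 1 + a := by linarith
  have hc : (1+a)^r ≤ 2^r * a^r := by
    calc (1+a)^r ≤ (2*a)^r := Real.rpow_le_rpow hb.le (by linarith) hr.le
      _ = 2^r * a^r := Real.mul_rpow (by norm_num) ha.le
  have hpa : (0:ℝ) < a ^ r := Real.rpow_pos_of_pos ha r
  have hpb : (0:ℝ) < (1+a) ^ r := Real.rpow_pos_of_pos hb r
  rw [Real.rpow_neg ha.le, Real.rpow_neg hb.le, inv_eq_one_div, inv_eq_one_div,
    mul_one_div, div_le_div_iff₀ hpa hpb]
  nlinarith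

lemma gker_integrableOn_outer (hs : 0 < s) :
    IntegrableOn (gker n s) ((ball (0:Rn n) 1)ᶜ) := by
  have hrk : ((Module.finrank ℝ (Rn n)):ℝ) < (n:ℝ) + 2*s := by
    rw [finrank_euclideanSpace_fin]; nlinarith
  have hint := integrable_one_add_norm (E := Rn n) (μ := volume) hrk
  refine Integrable.mono' ((hint.const_mul ((2:ℝ)^((n:ℝ)+2*s))).integrableOn)
    gker_meas.aestronglyMeasurable.restrict ?_
  filter_upwards [ae_restrict_mem measurableSet_ball.compl] with y hy
  have hy1 : (1:ℝ) ≤ ‖y‖ := by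
    simp only [mem_compl_iff, mem_ball_zero_iff, not_lt] at hy; exact hy
  have hr0 : (0:ℝ) < (n:ℝ) + 2*s := by positivity
  rw [Real.norm_eq_abs, abs_of_nonneg (gker_nonneg y)]
  have h1 : gker n s y ≤ ‖y‖ ^ (-((n:ℝ) + 2*s)) := by
    have hm : min ‖y‖ 1 ≤ 1 := min_le_right _ _
    calc gker n s y ≤ 1 * ‖y‖ ^ (-(n:ℝ) - 2*s) :=
          mul_le_mul_of_nonneg_right hm (Real.rpow_nonneg (norm_nonneg _) _)
      _ = ‖y‖ ^ (-((n:ℝ) + 2*s)) := by rw [one_mul]; ring_nf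
  exact h1.trans (rpow_neg_le_aux hy1 hr0)

lemma gker_integrableOn_singleton : IntegrableOn (gker n s) ({0} : Set (Rn n)) := by
  refine (integrable_zero _ _ _).congr ?_
  filter_upwards [ae_restrict_mem (measurableSet_singleton (0 : Rn n))] with y hy
  rw [mem_singleton_iff] at hy
  rw [hy, gker_zero, Pi.zero_apply]

lemma gker_integrable (hs : 0 < s) (hs2 : s < 1/2) :
    Integrable (gker n s) (volume : Measure (Rn n)) := by
  rw [← integrableOn_univ]
  have hsub : (univ : Set (Rn n)) ⊆ (ball (0:Rn n) 1 \ {0}) ∪ ({0} ∪ (ball (0:Rn n) 1)ᶜ) := by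
    intro y _
    by_cases h0 : y = 0
    · exact Or.inr (Or.inl (by simp [h0]))
    · by_cases h1 : y ∈ ball (0:Rn n) 1
      · exact Or.inl ⟨h1, by simpa using h0⟩
      · exact Or.inr (Or.inr h1)
  exact ((gker_integrableOn_inner hs hs2).union
    (gker_integrableOn_singleton.union (gker_integrableOn_outer hs))).mono_set hsub

lemma gker_small (hs : 0 < s) (hs2 : s < 1/2) {γ : ℝ} (hγ : 0 < γ) :
    ∃ r : ℝ, 0 < r ∧ r ≤ 1 ∧ ∫ y in ball (0:Rn n) r, gker n s y < γ := by
  have hint := gker_integrable (n := n) hs hs2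
  set G := ∫ y, gker n s y with hG
  set Sk : ℕ → Set (Rn n) := fun k => (ball (0:Rn n) ((1/2:ℝ)^k))ᶜ with hSk
  have hmono : Monotone Sk := by
    intro a b hab
    exact compl_subset_compl.2 (ball_subset_ball
      (pow_le_pow_of_le_one (by norm_num) (by norm_num) hab))
  have hunion : ⋃ k, Sk k = ({0}ᶜ : Set (Rn n)) := by
    ext y
    simp only [hSk, mem_iUnion, mem_compl_iff, mem_ball_zero_iff, not_lt, mem_singleton_iff]
    constructor
    · rintro ⟨k, hk⟩ hy0
      rw [hy0] at hk; simp at hk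
      exact absurd hk (not_le.2 (pow_pos (by norm_num) k))
    · intro hy0
      obtain ⟨k, hk⟩ := exists_pow_lt_of_lt_one (norm_pos_iff.2 hy0) (by norm_num : (1/2:ℝ) < 1)
      exact ⟨k, hk.le⟩
  have htend := tendsto_setIntegral_of_monotone (fun k => measurableSet_ball.compl)
    hmono hint.integrableOn
  rw [hunion] at htend
  have hzero : ∫ y in ({0} : Set (Rn n)), gker n s y = 0 := by
    refine integral_eq_zero_of_ae ?_
    filter_upwards [ae_restrict_mem (measurableSet_singleton (0 : Rn n))] with y hy
    simp only [mem_singleton_iff] at hy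
    simp [hy, gker_zero]
  have hcompl : ∫ y in ({0}ᶜ : Set (Rn n)), gker n s y = G := by
    have h := integral_add_compl (measurableSet_singleton (0 : Rn n)) hint
    rw [hzero, ← hG] at h; linarith [h]
  rw [hcompl] at htend
  have hball : Filter.Tendsto (fun k => ∫ y in ball (0:Rn n) ((1/2:ℝ)^k), gker n s y)
      Filter.atTop (nhds 0) := by
    have heq : ∀ k : ℕ, ∫ y in ball (0:Rn n) ((1/2:ℝ)^k), gker n s y
        = G - ∫ y in (ball (0:Rn n) ((1/2:ℝ)^k))ᶜ, gker n s y := by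
      intro k
      have h := integral_add_compl (measurableSet_ball (x := (0:Rn n)) (ε := (1/2:ℝ)^k)) hint
      rw [← hG] at h; linarith
    simp_rw [heq]
    have h2 := Filter.Tendsto.const_sub G htend
    rw [sub_self] at h2
    exact h2
  obtain ⟨k, hk⟩ := (hball.eventually_lt_const hγ).exists
  exact ⟨(1/2:ℝ)^k, pow_pos (by norm_num) k, pow_le_one₀ (by norm_num) (by norm_num), hk⟩

lemma lip_continuous {C : ℝ} {W : Rn n → ℝ}
    (hWl : ∀ a b, |W a - W b| ≤ C * ‖a - b‖) : Continuous W := by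
  have h := LipschitzWith.of_dist_le_mul (K := Real.toNNReal C) (f := W) (fun a b => by
    rw [Real.dist_eq, dist_eq_norm]
    exact (hWl a b).trans (mul_le_mul_of_nonneg_right (Real.le_coe_toNNReal C)
      (norm_nonneg _)))
  exact h.continuous

lemma integrand_integrable (hs : 0 < s) (hs2 : s < 1/2) {lam Lam : ℝ} {K : Rn n → ℝ}
    (hK : IsKernel n s lam Lam K) (hLam : 0 ≤ Lam)
    {C : ℝ} (hC : 0 ≤ C) {W : Rn n → ℝ}
    (hWb : ∀ a, |W a| ≤ C) (hWl : ∀ a b, |W a - W b| ≤ C * ‖a - b‖) (x : Rn n) :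
    Integrable (fun y => (W x - W (x + y)) * K y) (volume : Measure (Rn n)) := by
  obtain ⟨Kmeas, Knn, -, Kbd⟩ := hK
  have hWc : Continuous W := lip_continuous hWl
  refine Integrable.mono' ((gker_integrable hs hs2).const_mul (2*C*Lam)) ?_ (ae_of_all _ ?_)
  · exact ((continuous_const.sub (hWc.comp (continuous_const.add continuous_id))).aestronglyMeasurable).mul
      Kmeas.aestronglyMeasurable
  · intro y
    rw [Real.norm_eq_abs, abs_mul, abs_of_nonneg (Knn y)]
    by_cases h0 : y = 0
    · subst h0
      simp [gker_zero]
    · have h1 : |W x - W (x+y)| ≤ C * ‖y‖ := by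
        have := hWl x (x+y)
        rwa [show x - (x+y) = -y by abel, norm_neg] at this
      have h2 : |W x - W (x+y)| ≤ 2*C := by
        calc |W x - W (x+y)| ≤ |W x| + |W (x+y)| := abs_sub _ _
          _ ≤ 2*C := by linarith [hWb x, hWb (x+y)]
      have hmin : |W x - W (x+y)| ≤ 2*C*(min ‖y‖ 1) := by
        rcases le_total ‖y‖ 1 with h|h
        · rw [min_eq_left h]; nlinarith [norm_nonneg y]
        · rw [min_eq_right h]; linarith
      have hK' : K y ≤ Lam * ‖y‖ ^ (-(n:ℝ) - 2*s) := (Kbd y h0).2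
      calc |W x - W (x+y)| * K y
          ≤ (2*C*(min ‖y‖ 1)) * (Lam * ‖y‖ ^ (-(n:ℝ) - 2*s)) :=
            mul_le_mul hmin hK' (Knn y) (by positivity)
        _ = 2*C*Lam * gker n s y := by rw [gker]; ring

lemma core_estimate (hs : 0 < s) (hs2 : s < 1/2) {lam Lam : ℝ} {K : Rn n → ℝ}
    (hlam : 0 < lam) (hll : lam ≤ Lam) (hK : IsKernel n s lam Lam K)
    {C : ℝ} (hC : 0 ≤ C) {W : Rn n → ℝ}
    (hWb : ∀ a, |W a| ≤ C) (hWl : ∀ a b, |W a - W b| ≤ C * ‖a - b‖)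
    {S η r : ℝ} (hη : 0 ≤ η) (hr : 0 < r) (hr1 : r ≤ 1)
    (hsup : ∀ a, W a ≤ S) (x : Rn n) (hx : S - η ≤ W x) :
    - Lop K W x ≤ C * Lam * (∫ y in ball (0:Rn n) r, gker n s y)
      + η * (Lam / r) * (∫ y, gker n s y) := by
  have hLam : 0 < Lam := hlam.trans_le hll
  have Knn : ∀ y, 0 ≤ K y := hK.2.1
  have Kbd := hK.2.2.2
  have hGint := gker_integrable (n := n) hs hs2
  have hint := integrand_integrable hs hs2 hK hLam.le hC hWb hWl x
  have hint' : Integrable (fun y => (W (x+y) - W x) * K y) (volume : Measure (Rn n)) := by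
    refine hint.neg.congr (ae_of_all _ fun y => by simp only [Pi.neg_apply]; ring)
  have hneg : - Lop K W x = ∫ y, (W (x+y) - W x) * K y := by
    rw [Lop, ← integral_neg]
    exact integral_congr_ae (ae_of_all _ fun y => by ring)
  have hsplit : ∫ y, (W (x+y) - W x) * K y
      = (∫ y in ball (0:Rn n) r, (W (x+y) - W x) * K y)
        + ∫ y in (ball (0:Rn n) r)ᶜ, (W (x+y) - W x) * K y :=
    (integral_add_compl measurableSet_ball hint').symm
  have hball : ∫ y in ball (0:Rn n) r, (W (x+y) - W x) * K y
      ≤ C * Lam * (∫ y in ball (0:Rn n) r, gker n s y) := by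
    rw [← integral_const_mul]
    refine setIntegral_mono_on hint'.integrableOn
      ((hGint.const_mul (C*Lam)).integrableOn) measurableSet_ball ?_
    intro y hy
    have hy1 : ‖y‖ < r := mem_ball_zero_iff.1 hy
    by_cases h0 : y = 0
    · subst h0; simp [gker_zero, Knn]
    · have h1 : W (x+y) - W x ≤ C*‖y‖ := by
        have := hWl (x+y) x
        rw [add_sub_cancel_left] at this
        exact (le_abs_self _).trans this
      have h3 : ‖y‖ * K y ≤ Lam * gker n s y := by
        have hKb := (Kbd y h0).2
        have hmin : min ‖y‖ 1 = ‖y‖ := min_eq_left (hy1.le.trans hr1)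
        calc ‖y‖ * K y ≤ ‖y‖ * (Lam * ‖y‖ ^ (-(n:ℝ) - 2*s)) :=
              mul_le_mul_of_nonneg_left hKb (norm_nonneg y)
          _ = Lam * gker n s y := by rw [gker, hmin]; ring
      calc (W (x+y) - W x) * K y ≤ (C * ‖y‖) * K y :=
            mul_le_mul_of_nonneg_right h1 (Knn y)
        _ = C * (‖y‖ * K y) := by ring
        _ ≤ C * (Lam * gker n s y) := mul_le_mul_of_nonneg_left h3 hC
        _ = C * Lam * gker n s y := by ring
  have hcompl : ∫ y in (ball (0:Rn n) r)ᶜ, (W (x+y) - W x) * K y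
      ≤ η * (Lam / r) * (∫ y, gker n s y) := by
    have step1 : ∫ y in (ball (0:Rn n) r)ᶜ, (W (x+y) - W x) * K y
        ≤ ∫ y in (ball (0:Rn n) r)ᶜ, η * (Lam / r) * gker n s y := by
      refine setIntegral_mono_on hint'.integrableOn
        ((hGint.const_mul (η * (Lam / r))).integrableOn) measurableSet_ball.compl ?_
      intro y hy
      have hyr : r ≤ ‖y‖ := by
        simpa only [mem_compl_iff, mem_ball_zero_iff, not_lt] using hy
      have h0 : y ≠ 0 := by
        intro h; rw [h, norm_zero] at hyr; exact absurd hyr (not_le.2 hr)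
      have h1 : W (x+y) - W x ≤ η := by
        have := hsup (x+y); linarith
      have h2 : K y ≤ (Lam / r) * gker n s y := by
        have hKb := (Kbd y h0).2
        have hmin : r ≤ min ‖y‖ 1 := le_min hyr hr1
        have hp : (0:ℝ) ≤ ‖y‖ ^ (-(n:ℝ) - 2*s) := Real.rpow_nonneg (norm_nonneg _) _
        have h3 : r * ‖y‖ ^ (-(n:ℝ) - 2*s) ≤ gker n s y := by
          rw [gker]; exact mul_le_mul_of_nonneg_right hmin hp
        calc K y ≤ Lam * ‖y‖ ^ (-(n:ℝ) - 2*s) := hKb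
          _ ≤ Lam * (gker n s y / r) := by
              refine mul_le_mul_of_nonneg_left ?_ hLam.le
              rw [le_div_iff₀ hr]; linarith
          _ = (Lam / r) * gker n s y := by ring
      calc (W (x+y) - W x) * K y ≤ η * K y := mul_le_mul_of_nonneg_right h1 (Knn y)
        _ ≤ η * ((Lam / r) * gker n s y) := mul_le_mul_of_nonneg_left h2 hη
        _ = η * (Lam / r) * gker n s y := by ring
    have step2 : ∫ y in (ball (0:Rn n) r)ᶜ, η * (Lam / r) * gker n s y
        ≤ η * (Lam / r) * (∫ y, gker n s y) := by
      rw [integral_const_mul]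
      refine mul_le_mul_of_nonneg_left ?_ (by positivity)
      exact setIntegral_le_integral hGint (ae_of_all _ gker_nonneg)
    exact step1.trans step2
  rw [hneg, hsplit]
  linarith

end Stmt16

open Stmt16

set_option maxHeartbeats 1000000 in
/-- comparison principle for the penalized problem: if
`∂ₜu + Lu = β_ε(u-φ) + f`, `∂ₜv + Lv = β_ε(v-ψ) + g`, `u(·,0) = u₀ ≤ v₀ = v(·,0)`,
`φ ≤ ψ` and `f ≤ g`, then `u ≤ v` on `ℝⁿ × (0,T)`. -/
theorem stmt16 (n : ℕ) (s lam Lam ε T : ℝ)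
    (hs : s ∈ Ioo (0 : ℝ) (1/2)) (hlam : 0 < lam) (hll : lam ≤ Lam)
    (hε : 0 < ε) (hT : 0 < T)
    (K : Rn n → ℝ) (hK : IsKernel n s lam Lam K)
    (φ ψ u0 v0 : Rn n → ℝ) (f g : Rn n → ℝ → ℝ)
    (hφ : BddLip φ) (hψ : BddLip ψ) (hu0 : BddLip u0) (hv0 : BddLip v0)
    (hf : BddLipT T f) (hg : BddLipT T g)
    (u v : Rn n → ℝ → ℝ)
    (hu : BddLipIcc T u) (hv : BddLipIcc T v)
    -- continuously differentiable in t on ℝⁿ × (0,T)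
    (hudt : ∀ (x : Rn n), ∀ t ∈ Ioo (0:ℝ) T, DifferentiableAt ℝ (u x) t)
    (hudtc : ∀ x : Rn n, ContinuousOn (deriv (u x)) (Ioo 0 T))
    (hvdt : ∀ (x : Rn n), ∀ t ∈ Ioo (0:ℝ) T, DifferentiableAt ℝ (v x) t)
    (hvdtc : ∀ x : Rn n, ContinuousOn (deriv (v x)) (Ioo 0 T))
    -- the penalized equations
    (hequ : ∀ x t, t ∈ Ioo (0:ℝ) T →
      deriv (u x) t + Lop K (fun y => u y t) x
        = Real.exp (-(u x t - φ x) / ε) + f x t)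
    (heqv : ∀ x t, t ∈ Ioo (0:ℝ) T →
      deriv (v x) t + Lop K (fun y => v y t) x
        = Real.exp (-(v x t - ψ x) / ε) + g x t)
    -- initial conditions
    (hiu : ∀ x, u x 0 = u0 x) (hiv : ∀ x, v x 0 = v0 x)
    -- ordering of the data
    (h0 : ∀ x, u0 x ≤ v0 x) (hobs : ∀ x, φ x ≤ ψ x)
    (hfg : ∀ x t, t ∈ Ioo 0 T → f x t ≤ g x t) :
    ∀ x t, t ∈ Ioo 0 T → u x t ≤ v x t := by
  intro x t ht
  rw [BddLipIcc] at hu hv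
  obtain ⟨Mu, hMub, hMul⟩ := hu
  obtain ⟨Mv, hMvb, hMvl⟩ := hv
  have h0T : (0:ℝ) ∈ Icc (0:ℝ) T := ⟨le_rfl, hT.le⟩
  have hMu0 : 0 ≤ Mu := (abs_nonneg _).trans (hMub 0 0 h0T)
  have hMv0 : 0 ≤ Mv := (abs_nonneg _).trans (hMvb 0 0 h0T)
  set C : ℝ := Mu + Mv + 1 with hCdef
  have hC0 : 0 < C := by rw [hCdef]; linarith
  have hLam : 0 < Lam := hlam.trans_le hll
  haveI : Nonempty (Rn n) := ⟨0⟩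
  -- bounds for w = u - v
  have hwB : ∀ x' : Rn n, ∀ σ ∈ Icc (0:ℝ) T, |u x' σ - v x' σ| ≤ C := by
    intro x' σ hσ
    calc |u x' σ - v x' σ| ≤ |u x' σ| + |v x' σ| := abs_sub _ _
      _ ≤ C := by
          have h1 := hMub x' σ hσ; have h2 := hMvb x' σ hσ; rw [hCdef]; linarith
  have hwL : ∀ x' x'' : Rn n, ∀ σ ∈ Icc (0:ℝ) T, ∀ σ' ∈ Icc (0:ℝ) T,
      |(u x' σ - v x' σ) - (u x'' σ' - v x'' σ')| ≤ C * (‖x' - x''‖ + |σ - σ'|) := by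
    intro x' x'' σ hσ σ' hσ'
    have h1 := hMul x' x'' σ hσ σ' hσ'
    have h2 := hMvl x' x'' σ hσ σ' hσ'
    have e : (u x' σ - v x' σ) - (u x'' σ' - v x'' σ')
        = (u x' σ - u x'' σ') - (v x' σ - v x'' σ') := by ring
    rw [e]
    have h3 := abs_sub (u x' σ - u x'' σ') (v x' σ - v x'' σ')
    have hnn : 0 ≤ ‖x' - x''‖ + |σ - σ'| := by positivity
    have hCc : (Mu + Mv) * (‖x' - x''‖ + |σ - σ'|) ≤ C * (‖x' - x''‖ + |σ - σ'|) := by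
      apply mul_le_mul_of_nonneg_right _ hnn
      rw [hCdef]; linarith
    linarith
  -- the sup function m
  set m : ℝ → ℝ := fun σ => ⨆ x' : Rn n, (u x' σ - v x' σ) with hmdef
  have hbdd : ∀ σ ∈ Icc (0:ℝ) T, BddAbove (range fun x' : Rn n => u x' σ - v x' σ) := by
    intro σ hσ
    exact ⟨C, by rintro _ ⟨x', rfl⟩; exact (abs_le.1 (hwB x' σ hσ)).2⟩
  have hle_m : ∀ x' : Rn n, ∀ σ ∈ Icc (0:ℝ) T, u x' σ - v x' σ ≤ m σ := by
    intro x' σ hσ; exact le_ciSup (hbdd σ hσ) x'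
  have hm_le : ∀ σ : ℝ, ∀ a : ℝ, (∀ x' : Rn n, u x' σ - v x' σ ≤ a) → m σ ≤ a := by
    intro σ a ha; exact ciSup_le ha
  have hmLip : ∀ σ ∈ Icc (0:ℝ) T, ∀ σ' ∈ Icc (0:ℝ) T, |m σ - m σ'| ≤ C * |σ - σ'| := by
    have key : ∀ σ ∈ Icc (0:ℝ) T, ∀ σ' ∈ Icc (0:ℝ) T, m σ ≤ m σ' + C * |σ - σ'| := by
      intro σ hσ σ' hσ'
      refine hm_le σ _ fun x' => ?_
      have h1 := hwL x' x' σ hσ σ' hσ'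
      rw [sub_self, norm_zero, zero_add] at h1
      have h2 := hle_m x' σ' hσ'
      linarith [(abs_le.1 h1).2]
    intro σ hσ σ' hσ'
    rw [abs_sub_le_iff]
    refine ⟨by linarith [key σ hσ σ' hσ'], ?_⟩
    have h4 := key σ' hσ' σ hσ
    rw [abs_sub_comm σ' σ] at h4
    linarith
  have hm0 : m 0 ≤ 0 :=
    hm_le 0 0 fun x' => by rw [hiu, hiv]; exact sub_nonpos.2 (h0 x')
  have hmcontT : ContinuousOn m (Icc 0 T) := by
    have hlip : LipschitzOnWith (Real.toNNReal C) m (Icc 0 T) := by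
      refine LipschitzOnWith.of_dist_le_mul fun a ha b hb => ?_
      rw [Real.dist_eq, Real.dist_eq]
      exact (hmLip a ha b hb).trans
        (mul_le_mul_of_nonneg_right (Real.le_coe_toNNReal C) (abs_nonneg _))
    exact hlip.continuousOn
  have hwcont : ∀ x' : Rn n, ContinuousOn (fun σ => u x' σ - v x' σ) (Icc 0 T) := by
    intro x'
    have hlip : LipschitzOnWith (Real.toNNReal C) (fun σ => u x' σ - v x' σ) (Icc 0 T) := by
      refine LipschitzOnWith.of_dist_le_mul fun a ha b hb => ?_
      rw [Real.dist_eq, Real.dist_eq]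
      have h1 := hwL x' x' a ha b hb
      rw [sub_self, norm_zero, zero_add] at h1
      exact h1.trans (mul_le_mul_of_nonneg_right (Real.le_coe_toNNReal C) (abs_nonneg _))
    exact hlip.continuousOn
  have hxt : u x t - v x t ≤ m t := hle_m x t ⟨ht.1.le, ht.2.le⟩
  -- main claim via the fencing theorem
  have hsuff : ∀ δ : ℝ, 0 < δ → m t ≤ δ + δ * t := by
    intro δ hδ
    have hcont1 : ContinuousOn m (Icc 0 t) := hmcontT.mono (Icc_subset_Icc le_rfl ht.2.le)
    have hinit1 : m 0 ≤ δ + δ * 0 := by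
      have : δ + δ * 0 = δ := by ring
      rw [this]; linarith
    have hBderiv1 : ∀ z : ℝ, HasDerivAt (fun σ : ℝ => δ + δ * σ) δ z := by
      intro z
      simpa using ((hasDerivAt_id z).const_mul δ).const_add δ
    have hbound1 : ∀ z ∈ Ico (0:ℝ) t, m z = δ + δ * z →
        (if δ ≤ m z then (0:ℝ) else C + 1) < δ := by
      intro z hz heq
      have hle : δ ≤ m z := by rw [heq]; nlinarith [hz.1]
      rw [if_pos hle]; exact hδ
    have hslope1 : ∀ z ∈ Ico (0:ℝ) t, ∀ ρ : ℝ,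
        (if δ ≤ m z then (0:ℝ) else C + 1) < ρ →
        ∃ᶠ ζ in nhdsWithin z (Ioi z), slope m z ζ < ρ := by
      intro z hz ρ hρ
      have hzIcc : z ∈ Icc (0:ℝ) T := ⟨hz.1, (hz.2.trans ht.2).le⟩
      by_cases hcase : δ ≤ m z
      · -- the near-maximum case: main analytic estimate
        rw [if_pos hcase] at hρ
        obtain ⟨r₀, hr₀, hr₀1, hIr⟩ := gker_small (n := n) hs.1 hs.2
          (γ := ρ/(2*C*Lam)) (by positivity)
        have hIbd : C * Lam * (∫ y in ball (0:Rn n) r₀, gker n s y) < ρ/2 := by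
          have h1 : C * Lam * (∫ y in ball (0:Rn n) r₀, gker n s y)
              < C * Lam * (ρ/(2*C*Lam)) := by
            exact mul_lt_mul_of_pos_left hIr (by positivity)
          have h2 : C * Lam * (ρ/(2*C*Lam)) = ρ/2 := by field_simp
          linarith
        set G : ℝ := ∫ y, gker n s y with hGdef
        have hG0 : 0 ≤ G := integral_nonneg gker_nonneg
        have e1 : ∀ᶠ ζ in nhdsWithin z (Ioi z), ζ ∈ Ioc z t :=
          Ioc_mem_nhdsGT_of_mem (⟨le_rfl, hz.2⟩ : z ∈ Ico z t)
        have e2 : ∀ᶠ ζ in nhdsWithin z (Ioi z),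
            ((ζ-z)^2 + 2*C*(ζ-z))*(Lam/r₀)*G + (ζ-z) < ρ/2 := by
          have hco : Continuous fun ζ : ℝ =>
              ((ζ-z)^2 + 2*C*(ζ-z))*(Lam/r₀)*G + (ζ-z) := by fun_prop
          have hval : ((z-z)^2 + 2*C*(z-z))*(Lam/r₀)*G + (z-z) = 0 := by norm_num
          have h0' : Filter.Tendsto (fun ζ : ℝ =>
              ((ζ-z)^2 + 2*C*(ζ-z))*(Lam/r₀)*G + (ζ-z)) (nhdsWithin z (Ioi z)) (nhds 0) := by
            rw [← hval]
            exact (hco.tendsto z).mono_left nhdsWithin_le_nhds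
          exact h0'.eventually_lt_const (by positivity)
        have e3 : ∀ᶠ ζ in nhdsWithin z (Ioi z), (ζ-z)^2 + 3*C*(ζ-z) < δ := by
          have hco : Continuous fun ζ : ℝ => (ζ-z)^2 + 3*C*(ζ-z) := by fun_prop
          have hval : ((z-z):ℝ)^2 + 3*C*(z-z) = 0 := by norm_num
          have h0' : Filter.Tendsto (fun ζ : ℝ => (ζ-z)^2 + 3*C*(ζ-z))
              (nhdsWithin z (Ioi z)) (nhds 0) := by
            rw [← hval]
            exact (hco.tendsto z).mono_left nhdsWithin_le_nhds
          exact h0'.eventually_lt_const hδ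
        have hev : ∀ᶠ ζ in nhdsWithin z (Ioi z), slope m z ζ < ρ := by
          filter_upwards [e1, e2, e3] with ζ hζt hcond1 hcond2
          have hh0 : 0 < ζ - z := sub_pos.2 hζt.1
          have hζIcc : ζ ∈ Icc (0:ℝ) T := ⟨hz.1.trans hζt.1.le, (hζt.2.trans_lt ht.2).le⟩
          -- pick a near-maximum point at time ζ
          have hlt : m ζ - (ζ-z)^2 < m ζ := by nlinarith
          obtain ⟨x₁, hx₁⟩ : ∃ x₁ : Rn n, m ζ - (ζ-z)^2 < u x₁ ζ - v x₁ ζ :=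
            exists_lt_of_lt_ciSup hlt
          -- mean value theorem in time
          have hIccsub : Icc z ζ ⊆ Icc 0 T := Icc_subset_Icc hz.1 hζIcc.2
          have hcont2 : ContinuousOn (fun σ => u x₁ σ - v x₁ σ) (Icc z ζ) :=
            (hwcont x₁).mono hIccsub
          have hIoosub : Ioo z ζ ⊆ Ioo 0 T := fun σ hσ =>
            ⟨lt_of_le_of_lt hz.1 hσ.1, lt_of_lt_of_le hσ.2 hζIcc.2⟩
          have hdiff : DifferentiableOn ℝ (fun σ => u x₁ σ - v x₁ σ) (Ioo z ζ) := by
            intro σ hσ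
            have hσT := hIoosub hσ
            exact ((hudt x₁ σ hσT).sub (hvdt x₁ σ hσT)).differentiableWithinAt
          obtain ⟨τ, hτ, hderiv⟩ :=
            exists_deriv_eq_slope (fun σ => u x₁ σ - v x₁ σ) hζt.1 hcont2 hdiff
          have hτT : τ ∈ Ioo 0 T := hIoosub hτ
          have hτIcc : τ ∈ Icc (0:ℝ) T := ⟨hτT.1.le, hτT.2.le⟩
          have hDeq : deriv (fun σ => u x₁ σ - v x₁ σ) τ
              = deriv (u x₁) τ - deriv (v x₁) τ :=
            deriv_sub (hudt x₁ τ hτT) (hvdt x₁ τ hτT)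
          -- near-sup property at time τ
          have hτζ : |τ - ζ| ≤ ζ - z := by
            rw [abs_of_nonpos (by linarith [hτ.2] : τ - ζ ≤ 0)]; linarith [hτ.1]
          have hLipw := hwL x₁ x₁ τ hτIcc ζ hζIcc
          rw [sub_self, norm_zero, zero_add] at hLipw
          have hCmul : C * |τ - ζ| ≤ C * (ζ - z) := mul_le_mul_of_nonneg_left hτζ hC0.le
          have h1 : (u x₁ ζ - v x₁ ζ) - C*(ζ-z) ≤ u x₁ τ - v x₁ τ := by
            linarith [(abs_le.1 hLipw).1]
          have hmτζ := hmLip τ hτIcc ζ hζIcc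
          have h2 : m τ ≤ m ζ + C*(ζ-z) := by
            linarith [(abs_le.1 hmτζ).2]
          have hzτabs : |z - τ| ≤ ζ - z := by
            rw [abs_of_nonpos (by linarith [hτ.1])]; linarith [hτ.2]
          have hmzτ := hmLip z hzIcc τ hτIcc
          have hCmul2 : C * |z - τ| ≤ C * (ζ - z) := mul_le_mul_of_nonneg_left hzτabs hC0.le
          have h2' : m z ≤ m τ + C*(ζ-z) := by
            linarith [(abs_le.1 hmzτ).2]
          have hnear : m τ - ((ζ-z)^2 + 2*C*(ζ-z)) ≤ u x₁ τ - v x₁ τ := by linarith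
          have hwpos : 0 < u x₁ τ - v x₁ τ := by linarith
          -- use the equations
          have hequ' := hequ x₁ τ hτT
          have heqv' := heqv x₁ τ hτT
          have hexp : Real.exp (-(u x₁ τ - φ x₁) / ε) ≤ Real.exp (-(v x₁ τ - ψ x₁) / ε) := by
            apply Real.exp_le_exp.2
            have hobs' := hobs x₁
            gcongr
            linarith
          have hfg' := hfg x₁ τ hτT
          -- Lop is linear on our functions
          have hMuL : ∀ a b : Rn n, |u a τ - u b τ| ≤ Mu * ‖a - b‖ := by
            intro a b
            have h3 := hMul a b τ hτIcc τ hτIcc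
            simpa using h3
          have hMvL : ∀ a b : Rn n, |v a τ - v b τ| ≤ Mv * ‖a - b‖ := by
            intro a b
            have h3 := hMvl a b τ hτIcc τ hτIcc
            simpa using h3
          have hintu := integrand_integrable (n := n) hs.1 hs.2 hK hLam.le hMu0
            (W := fun a => u a τ) (fun a => hMub a τ hτIcc) hMuL x₁
          have hintv := integrand_integrable (n := n) hs.1 hs.2 hK hLam.le hMv0
            (W := fun a => v a τ) (fun a => hMvb a τ hτIcc) hMvL x₁
          have hsplitL : Lop K (fun a => u a τ - v a τ) x₁
              = Lop K (fun y => u y τ) x₁ - Lop K (fun y => v y τ) x₁ := by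
            rw [Lop, Lop, Lop, ← integral_sub hintu hintv]
            exact integral_congr_ae (ae_of_all _ fun y => by ring)
          -- core nonlocal estimate
          have hwLτ : ∀ a b : Rn n, |(u a τ - v a τ) - (u b τ - v b τ)| ≤ C * ‖a - b‖ := by
            intro a b
            have h3 := hwL a b τ hτIcc τ hτIcc
            simpa using h3
          have hcore := core_estimate (n := n) hs.1 hs.2 hlam hll hK hC0.le
            (W := fun a => u a τ - v a τ) (fun a => hwB a τ hτIcc) hwLτ
            (S := m τ) (η := (ζ-z)^2 + 2*C*(ζ-z)) (r := r₀)
            (by nlinarith) hr₀ hr₀1 (fun a => hle_m a τ hτIcc) x₁ hnear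
          have hD : deriv (u x₁) τ - deriv (v x₁) τ
              ≤ C * Lam * (∫ y in ball (0:Rn n) r₀, gker n s y)
                + ((ζ-z)^2 + 2*C*(ζ-z)) * (Lam / r₀) * G := by
            have e3' : deriv (u x₁) τ - deriv (v x₁) τ
                ≤ - Lop K (fun a => u a τ - v a τ) x₁ := by
              rw [hsplitL]; linarith
            linarith [hcore]
          -- convert the MVT identity to a slope bound
          have hmul : (ζ - z) * deriv (fun σ => u x₁ σ - v x₁ σ) τ
              = (u x₁ ζ - v x₁ ζ) - (u x₁ z - v x₁ z) := by
            rw [hderiv]; field_simp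
          have hz_le : u x₁ z - v x₁ z ≤ m z := hle_m x₁ z hzIcc
          have hfinal : m ζ - m z
              ≤ (ζ - z) * (deriv (u x₁) τ - deriv (v x₁) τ) + (ζ-z)^2 := by
            have hmul' : (ζ - z) * (deriv (u x₁) τ - deriv (v x₁) τ)
                = (u x₁ ζ - v x₁ ζ) - (u x₁ z - v x₁ z) := by
              rw [← hDeq]; exact hmul
            linarith
          have hDh : (deriv (u x₁) τ - deriv (v x₁) τ) + (ζ - z) < ρ := by
            linarith
          have hmulfin : (ζ-z) * ((deriv (u x₁) τ - deriv (v x₁) τ) + (ζ - z))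
              < (ζ-z) * ρ := mul_lt_mul_of_pos_left hDh hh0
          rw [slope_def_field, div_lt_iff₀ hh0]
          nlinarith
        exact hev.frequently
      · -- the easy case: slope bounded by the Lipschitz constant
        rw [if_neg hcase] at hρ
        have hev : ∀ᶠ ζ in nhdsWithin z (Ioi z), slope m z ζ < ρ := by
          filter_upwards [Ioc_mem_nhdsGT_of_mem (⟨le_rfl, hz.2⟩ : z ∈ Ico z t)] with ζ hζ
          have hζIcc : ζ ∈ Icc (0:ℝ) T := ⟨hz.1.trans hζ.1.le, (hζ.2.trans_lt ht.2).le⟩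
          have h1 := hmLip ζ hζIcc z hzIcc
          have h2 : |ζ - z| = ζ - z := abs_of_pos (sub_pos.2 hζ.1)
          rw [slope_def_field, div_lt_iff₀ (sub_pos.2 hζ.1)]
          rw [h2] at h1
          nlinarith [(abs_le.1 h1).2, sub_pos.2 hζ.1]
        exact hev.frequently
    exact image_le_of_liminf_slope_right_lt_deriv_boundary (f := m)
      (f' := fun z => if δ ≤ m z then (0:ℝ) else C + 1)
      (B := fun σ : ℝ => δ + δ * σ) (B' := fun _ => δ)
      hcont1 hslope1 hinit1 hBderiv1 hbound1 ⟨ht.1.le, le_rfl⟩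
  have hmt : m t ≤ 0 := by
    by_contra hpos
    push_neg at hpos
    have h1t : (0:ℝ) < 1 + t := by linarith [ht.1]
    have h2 := hsuff (m t / (2 * (1 + t))) (by positivity)
    have heq : m t / (2 * (1 + t)) + m t / (2 * (1 + t)) * t = m t / 2 := by
      field_simp
    linarith
  linarith


end
end
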